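/- arXiv:1702.05722 — 4 statements merged into one kernel-verified Lean document; each statement's English description precedes it below -/
import Mathlib

section
/- Let (𝒳, d) be a compact metric space, ε > 0 and D > 2. Suppose S ⊆ 𝒳 is a (2Dε)-separated set (any two distinct points of S have distance ≥ 2Dε). Let X, Y be 𝒳-valued random variables on a probability space such that X is uniformly distributed over S and E[d(X,Y)] < ε. Then I(X;Y) ≥ (1 - 1/D) log|S| - H(1/D). -/
open MeasureTheory ProbabilityTheory Real Filter Set
open scoped ENNReal NNReal

noncomputable def miPartitionSum {Ω 𝒳 𝒴 : Type*} [MeasureSpace Ω] {M N : ℕ}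
    (X : Ω → 𝒳) (Y : Ω → 𝒴) (f : 𝒳 → Fin M) (g : 𝒴 → Fin N) : ℝ :=
  ∑ m : Fin M, ∑ n : Fin N,
    (ℙ {ω | f (X ω) = m ∧ g (Y ω) = n}).toReal *
      Real.log ((ℙ {ω | f (X ω) = m ∧ g (Y ω) = n}).toReal /
        ((ℙ {ω | f (X ω) = m}).toReal * (ℙ {ω | g (Y ω) = n}).toReal))

/-- The mutual information `I(X;Y)`: the supremum, over finite measurable partitions of the
value spaces (encoded as measurable maps onto `Fin M`, `Fin N`), of the partition sums
`Σ_{m,n} P((X,Y) ∈ P_m × Q_n) log [P((X,Y) ∈ P_m × Q_n) / (P(X ∈ P_m) P(Y ∈ Q_n))]`. -/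
noncomputable def mutualInformation {Ω 𝒳 𝒴 : Type*} [MeasureSpace Ω]
    [MeasurableSpace 𝒳] [MeasurableSpace 𝒴] (X : Ω → 𝒳) (Y : Ω → 𝒴) : ℝ≥0∞ :=
  ⨆ (M : ℕ) (N : ℕ) (f : 𝒳 → Fin M) (g : 𝒴 → Fin N) (_ : Measurable f) (_ : Measurable g),
    ENNReal.ofReal (miPartitionSum X Y f g)

noncomputable def binEnt (p : ℝ) : ℝ := -(p * Real.log p) - (1 - p) * Real.log (1 - p)

/-- Log-sum inequality. -/
lemma log_sum_ineq {ι : Type*} (s : Finset ι) (p q : ι → ℝ)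
    (hp : ∀ i ∈ s, 0 ≤ p i) (hq : ∀ i ∈ s, 0 ≤ q i)
    (h0 : ∀ i ∈ s, q i = 0 → p i = 0) :
    (∑ i ∈ s, p i) * Real.log ((∑ i ∈ s, p i) / (∑ i ∈ s, q i)) ≤
      ∑ i ∈ s, p i * Real.log (p i / q i) := by
  by_cases hP : (∑ i ∈ s, p i) = 0
  · have hz : ∀ i ∈ s, p i = 0 := by
      intro i hi
      exact (Finset.sum_eq_zero_iff_of_nonneg hp).1 hP i hi
    rw [hP, zero_mul]
    apply Finset.sum_nonneg
    intro i hi; rw [hz i hi]; simp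
  · have hPpos : 0 < ∑ i ∈ s, p i := (Finset.sum_nonneg hp).lt_of_ne (Ne.symm hP)
    have hQpos : 0 < ∑ i ∈ s, q i := by
      rcases (Finset.sum_nonneg hq).lt_or_eq with h | h
      · exact h
      · exfalso; apply hP
        apply Finset.sum_eq_zero
        intro i hi
        exact h0 i hi ((Finset.sum_eq_zero_iff_of_nonneg hq).1 h.symm i hi)
    set P := ∑ i ∈ s, p i
    set Q := ∑ i ∈ s, q i
    set t := P / Q with ht
    have htpos : 0 < t := div_pos hPpos hQpos
    have key : ∀ i ∈ s, p i * Real.log t + (p i - t * q i) ≤ p i * Real.log (p i / q i) := by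
      intro i hi
      rcases (hp i hi).lt_or_eq with hpi | hpi
      · have hqi : 0 < q i := by
          rcases (hq i hi).lt_or_eq with h | h
          · exact h
          · exact absurd (h0 i hi h.symm) hpi.ne'
        have hx : 0 < p i / (t * q i) := div_pos hpi (mul_pos htpos hqi)
        have hlog : 1 - (p i / (t * q i))⁻¹ ≤ Real.log (p i / (t * q i)) :=
          Real.one_sub_inv_le_log_of_pos hx
        have hinv : (p i / (t * q i))⁻¹ = t * q i / p i := by
          rw [inv_div]
        rw [hinv] at hlog
        have hsplit : Real.log (p i / q i) = Real.log (p i / (t * q i)) + Real.log t := by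
          rw [← Real.log_mul (ne_of_gt hx) (ne_of_gt htpos)]
          congr 1
          field_simp
        rw [hsplit, mul_add]
        have := mul_le_mul_of_nonneg_left hlog hpi.le
        have h2 : p i * (1 - t * q i / p i) = p i - t * q i := by
          field_simp
        nlinarith
      · rw [← hpi]
        simp only [zero_mul, zero_add, zero_sub, zero_mul]
        nlinarith [mul_nonneg htpos.le (hq i hi)]
    calc P * Real.log (P / Q)
        = ∑ i ∈ s, (p i * Real.log t + (p i - t * q i)) := by
          rw [Finset.sum_add_distrib, Finset.sum_sub_distrib, ← Finset.sum_mul,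
            ← Finset.mul_sum]
          have : t * Q = P := div_mul_cancel₀ P (ne_of_gt hQpos)
          rw [this]
          ring_nf
          rw [ht, div_eq_mul_inv]
          simp only [P]
          ring
      _ ≤ ∑ i ∈ s, p i * Real.log (p i / q i) := Finset.sum_le_sum key

lemma binEnt_eq (p : ℝ) : binEnt p = Real.binEntropy p := by
  simp [binEnt, Real.binEntropy, Real.log_inv]; ring

lemma binEnt_mono {a b : ℝ} (ha : 0 ≤ a) (hab : a ≤ b) (hb : b ≤ 2⁻¹) :
    binEnt a ≤ binEnt b := by
  rw [binEnt_eq, binEnt_eq]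
  exact Real.binEntropy_strictMonoOn.monotoneOn ⟨ha, hab.trans hb⟩ ⟨ha.trans hab, hb⟩ hab

set_option maxHeartbeats 2000000 in
/-- If `S` is a `2Dε`-separated subset of a compact metric space, `X` is uniformly
distributed over `S` and `E[d(X,Y)] < ε`, then `I(X;Y) ≥ (1 - 1/D) log|S| - H(1/D)`. -/
theorem mutualInformation_ge_of_uniform_on_separated
    {𝒳 : Type*} [MetricSpace 𝒳] [CompactSpace 𝒳] [MeasurableSpace 𝒳] [BorelSpace 𝒳]
    {Ω : Type*} [MeasureSpace Ω] [IsProbabilityMeasure (ℙ : Measure Ω)]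
    (ε D : ℝ) (hε : 0 < ε) (hD : 2 < D)
    (S : Finset 𝒳) (hS : S.Nonempty)
    (hsep : ∀ x ∈ S, ∀ y ∈ S, x ≠ y → 2 * D * ε ≤ dist x y)
    (X Y : Ω → 𝒳) (hX : Measurable X) (hY : Measurable Y)
    (hunif : ∀ x ∈ S, ℙ (X ⁻¹' {x}) = (S.card : ℝ≥0∞)⁻¹)
    (hdist : ∫ ω, dist (X ω) (Y ω) ∂ℙ < ε) :
    ENNReal.ofReal ((1 - 1 / D) * Real.log S.card - binEnt (1 / D))
      ≤ mutualInformation X Y := by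
  classical
  have hD0 : (0:ℝ) < D := by linarith
  have hD1 : 1 / D < 1 / 2 := by
    rw [div_lt_div_iff₀ hD0 (by norm_num)]; linarith
  have hD1' : (0:ℝ) < 1 / D := by positivity
  have hbinnonneg : 0 ≤ binEnt (1 / D) := by
    rw [binEnt_eq]
    exact Real.binEntropy_nonneg (by positivity) (by linarith)
  set K := S.card with hKdef
  have hK : 0 < K := Finset.card_pos.mpr hS
  by_cases hK1 : K = 1
  · have h0 : (1 - 1 / D) * Real.log K - binEnt (1 / D) ≤ 0 := by
      rw [hK1]; simpa using hbinnonneg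
    rw [ENNReal.ofReal_eq_zero.mpr h0]
    exact zero_le
  have hK2 : 2 ≤ K := by omega
  have hKr2 : (2:ℝ) ≤ (K:ℝ) := by exact_mod_cast hK2
  have hDε : 0 < D * ε := mul_pos hD0 hε
  -- enumerate S
  set x : Fin K → 𝒳 := fun m => ((S.equivFin.symm m : S) : 𝒳) with hxdef
  have hxS : ∀ m, x m ∈ S := fun m => (S.equivFin.symm m).2
  have hxinj : Function.Injective x := fun m n h =>
    S.equivFin.symm.injective (Subtype.ext h)
  have hxsurj : ∀ y ∈ S, ∃ m, x m = y := fun y hy =>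
    ⟨S.equivFin ⟨y, hy⟩, by simp [hxdef]⟩
  -- balls
  set B : Fin K → Set 𝒳 := fun m => Metric.ball (x m) (D * ε) with hBdef
  have hdisj : ∀ m n, m ≠ n → ∀ y, y ∈ B m → y ∉ B n := by
    intro m n hmn y hym hyn
    have h1 : dist y (x m) < D * ε := hym
    have h2 : dist y (x n) < D * ε := hyn
    have hne : x m ≠ x n := fun h => hmn (hxinj h)
    have h3 := hsep (x m) (hxS m) (x n) (hxS n) hne
    have h4 : dist (x m) (x n) ≤ dist (x m) y + dist y (x n) := dist_triangle _ _ _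
    rw [dist_comm (x m) y] at h4
    linarith
  -- the classifier
  set f : 𝒳 → Fin K := fun y =>
    if h : (Finset.univ.filter fun m => y ∈ B m).Nonempty then
      (Finset.univ.filter fun m => y ∈ B m).min' h
    else ⟨0, hK⟩ with hfdef
  have hfd : ∀ y, f y = if h : (Finset.univ.filter fun m => y ∈ B m).Nonempty then
      (Finset.univ.filter fun m => y ∈ B m).min' h else ⟨0, hK⟩ := fun y => rfl
  have hfval : ∀ (m : Fin K) (y : 𝒳), y ∈ B m → f y = m := by
    intro m y hy
    have hfilt : (Finset.univ.filter fun n => y ∈ B n) = {m} := by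
      ext n
      simp only [Finset.mem_filter, Finset.mem_univ, true_and, Finset.mem_singleton]
      constructor
      · intro hn
        by_contra hne
        exact hdisj n m hne y hn hy
      · rintro rfl; exact hy
    rw [hfd, hfilt, dif_pos (Finset.singleton_nonempty m)]
    exact Finset.min'_singleton m
  have hfx : ∀ m, f (x m) = m := fun m => hfval m (x m) (Metric.mem_ball_self hDε)
  have hfm : Measurable f := by
    apply measurable_to_countable'
    intro m
    by_cases hm : m = ⟨0, hK⟩
    · have hset : f ⁻¹' {m} = B m ∪ (⋂ n, (B n)ᶜ) := by
        ext y
        simp only [Set.mem_preimage, Set.mem_singleton_iff, Set.mem_union, Set.mem_iInter,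
          Set.mem_compl_iff]
        constructor
        · intro hfy
          by_cases h : (Finset.univ.filter fun n => y ∈ B n).Nonempty
          · left
            have hmem := Finset.min'_mem _ h
            rw [hfd, dif_pos h] at hfy
            rw [hfy] at hmem
            exact (Finset.mem_filter.1 hmem).2
          · right
            intro n hn
            exact h ⟨n, Finset.mem_filter.2 ⟨Finset.mem_univ n, hn⟩⟩
        · rintro (h | h)
          · exact hfval m y h
          · rw [hfd, dif_neg, hm]
            rintro ⟨n, hn⟩
            exact h n (Finset.mem_filter.1 hn).2
      rw [hset]
      exact (Metric.isOpen_ball.measurableSet).union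
        (MeasurableSet.iInter fun n => Metric.isOpen_ball.measurableSet.compl)
    · have hset : f ⁻¹' {m} = B m := by
        ext y
        simp only [Set.mem_preimage, Set.mem_singleton_iff]
        constructor
        · intro hfy
          by_cases h : (Finset.univ.filter fun n => y ∈ B n).Nonempty
          · have hmem := Finset.min'_mem _ h
            rw [hfd, dif_pos h] at hfy
            rw [hfy] at hmem
            exact (Finset.mem_filter.1 hmem).2
          · exfalso; apply hm
            rw [hfd, dif_neg h] at hfy
            exact hfy.symm
        · exact hfval m y
      rw [hset]
      exact Metric.isOpen_ball.measurableSet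
  -- X lands in S almost surely
  have hSmeas : MeasurableSet (↑S : Set 𝒳) := S.measurableSet
  have hXS : ℙ (X ⁻¹' ↑S) = 1 := by
    have hU : (X ⁻¹' ↑S) = ⋃ y ∈ S, X ⁻¹' {y} := by
      ext ω; simp
    rw [hU, measure_biUnion_finset ?_ (fun y _ => hX (measurableSet_singleton y))]
    · rw [Finset.sum_congr rfl (fun y hy => hunif y hy), Finset.sum_const, nsmul_eq_mul]
      rw [← hKdef, ENNReal.mul_inv_cancel]
      · exact_mod_cast hK.ne'
      · exact ENNReal.natCast_ne_top K
    · intro y _ z _ hyz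
      apply Set.disjoint_left.mpr
      intro ω h1 h2
      exact hyz ((Set.mem_preimage.1 h1).symm.trans (Set.mem_preimage.1 h2) : y = z)
  have hXSc : ℙ ((X ⁻¹' ↑S)ᶜ) = 0 := by
    rw [measure_compl (hX hSmeas) (measure_ne_top _ _), hXS, measure_univ, tsub_self]
  -- the cells
  set A : Fin K → Set Ω := fun m => {ω | f (X ω) = m} with hAdef
  set C : Fin K → Set Ω := fun n => {ω | f (Y ω) = n} with hCdef
  have hAm : ∀ m, MeasurableSet (A m) := fun m => (hfm.comp hX) (measurableSet_singleton m)
  have hCm : ∀ n, MeasurableSet (C n) := fun n => (hfm.comp hY) (measurableSet_singleton n)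
  have hApr : ∀ m, ℙ (A m) = (K : ℝ≥0∞)⁻¹ := by
    intro m
    have hsub1 : X ⁻¹' {x m} ⊆ A m := by
      intro ω hω
      have hXω : X ω = x m := hω
      show f (X ω) = m
      rw [hXω, hfx]
    have hsub2 : A m ⊆ X ⁻¹' {x m} ∪ (X ⁻¹' ↑S)ᶜ := by
      intro ω hω
      by_cases hXω : X ω ∈ S
      · left
        obtain ⟨n, hn⟩ := hxsurj _ hXω
        have h1 : f (X ω) = n := by rw [← hn, hfx]
        have h2 : n = m := h1.symm.trans hω
        show X ω = x m
        rw [← hn, h2]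
      · right; exact hXω
    refine le_antisymm ?_ ?_
    · calc ℙ (A m) ≤ ℙ (X ⁻¹' {x m} ∪ (X ⁻¹' ↑S)ᶜ) := measure_mono hsub2
        _ ≤ ℙ (X ⁻¹' {x m}) + ℙ ((X ⁻¹' ↑S)ᶜ) := measure_union_le _ _
        _ = (K : ℝ≥0∞)⁻¹ := by rw [hXSc, add_zero, hunif (x m) (hxS m)]
    · calc (K : ℝ≥0∞)⁻¹ = ℙ (X ⁻¹' {x m}) := (hunif (x m) (hxS m)).symm
        _ ≤ ℙ (A m) := measure_mono hsub1
  -- partition by the value of f ∘ Y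
  have hpart : ∀ (T : Set Ω), MeasurableSet T → ℙ T = ∑ n : Fin K, ℙ (T ∩ C n) := by
    intro T hT
    have hU : T = ⋃ n, T ∩ C n := by
      ext ω
      simp only [Set.mem_iUnion, Set.mem_inter_iff]
      exact ⟨fun h => ⟨f (Y ω), h, rfl⟩, fun ⟨n, h, _⟩ => h⟩
    conv_lhs => rw [hU]
    rw [measure_iUnion ?_ (fun n => hT.inter (hCm n)), tsum_fintype]
    intro m n hmn
    apply Set.disjoint_left.mpr
    rintro ω ⟨-, h1⟩ ⟨-, h2⟩
    exact hmn (h1.symm.trans h2 : m = n)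
  -- the diagonal event
  set E : Set Ω := {ω | f (X ω) = f (Y ω)} with hEdef
  have hEU : E = ⋃ m, A m ∩ C m := by
    ext ω
    simp only [Set.mem_iUnion, Set.mem_inter_iff]
    exact ⟨fun h => ⟨f (X ω), rfl, h.symm⟩, fun ⟨m, h1, h2⟩ => (h1 : f (X ω) = m).trans h2.symm⟩
  have hEm : MeasurableSet E := by
    rw [hEU]; exact MeasurableSet.iUnion fun m => (hAm m).inter (hCm m)
  have hEdiag : ℙ E = ∑ m : Fin K, ℙ (A m ∩ C m) := by
    rw [hEU, measure_iUnion ?_ (fun m => (hAm m).inter (hCm m)), tsum_fintype]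
    intro m n hmn
    apply Set.disjoint_left.mpr
    rintro ω ⟨h1, -⟩ ⟨h2, -⟩
    exact hmn (h1.symm.trans h2 : m = n)
  -- Markov's inequality and the error bound
  have hZm : Measurable fun ω => dist (X ω) (Y ω) := measurable_dist.comp (hX.prodMk hY)
  obtain ⟨c, hc⟩ := Metric.isBounded_iff.1 (isCompact_univ : IsCompact (Set.univ : Set 𝒳)).isBounded
  have hZint : Integrable (fun ω => dist (X ω) (Y ω)) ℙ := by
    apply (integrable_const c).mono' hZm.aestronglyMeasurable
    filter_upwards with ω
    rw [Real.norm_eq_abs, abs_of_nonneg dist_nonneg]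
    exact hc (Set.mem_univ _) (Set.mem_univ _)
  have hmark := mul_meas_ge_le_integral_of_nonneg
    (ae_of_all _ fun ω => dist_nonneg) hZint (D * ε)
  have herr1 : (ℙ {ω | D * ε ≤ dist (X ω) (Y ω)}).toReal ≤ 1 / D := by
    have h := lt_of_le_of_lt hmark hdist
    have h2 : (ℙ {ω | D * ε ≤ dist (X ω) (Y ω)}).toReal < ε / (D * ε) :=
      (lt_div_iff₀ hDε).mpr (by rw [measureReal_def] at h; linarith)
    have h3 : ε / (D * ε) = 1 / D := by
      rw [div_eq_div_iff hDε.ne' hD0.ne']; ring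
    linarith
  have hEc : Eᶜ ⊆ (X ⁻¹' ↑S)ᶜ ∪ {ω | D * ε ≤ dist (X ω) (Y ω)} := by
    intro ω hω
    by_cases h1 : X ω ∈ S
    · right
      by_contra h2
      have h2' : dist (X ω) (Y ω) < D * ε := not_le.1 h2
      apply hω
      obtain ⟨m, hm⟩ := hxsurj _ h1
      have hfX : f (X ω) = m := by rw [← hm, hfx]
      have hfY : f (Y ω) = m := by
        apply hfval
        show dist (Y ω) (x m) < D * ε
        rw [hm, dist_comm]
        exact h2'
      show f (X ω) = f (Y ω)
      rw [hfX, hfY]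
    · left; exact h1
  have hec : (ℙ Eᶜ).toReal ≤ 1 / D := by
    have hle : ℙ Eᶜ ≤ ℙ {ω | D * ε ≤ dist (X ω) (Y ω)} := by
      calc ℙ Eᶜ ≤ ℙ ((X ⁻¹' ↑S)ᶜ ∪ {ω | D * ε ≤ dist (X ω) (Y ω)}) := measure_mono hEc
        _ ≤ ℙ ((X ⁻¹' ↑S)ᶜ) + ℙ {ω | D * ε ≤ dist (X ω) (Y ω)} := measure_union_le _ _
        _ = ℙ {ω | D * ε ≤ dist (X ω) (Y ω)} := by rw [hXSc, zero_add]
    exact le_trans (ENNReal.toReal_mono (measure_ne_top _ _) hle) herr1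
  set a := (ℙ E).toReal with hadef
  have haec : a + (ℙ Eᶜ).toReal = 1 := by
    rw [← ENNReal.toReal_add (measure_ne_top _ _) (measure_ne_top _ _),
      measure_add_measure_compl hEm, measure_univ, ENNReal.toReal_one]
  have ha : 1 - 1 / D ≤ a := by linarith
  have ha1 : a ≤ 1 := by
    have := ENNReal.toReal_nonneg (a := ℙ Eᶜ)
    linarith
  have hapos : 0 < a := by
    have : 1 / D < 1 := by rw [div_lt_one hD0]; linarith
    linarith
  -- real-valued probabilities
  set pr : Fin K × Fin K → ℝ := fun z => (ℙ (A z.1 ∩ C z.2)).toReal with hprdef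
  set pc : Fin K → ℝ := fun n => (ℙ (C n)).toReal with hpcdef
  set qr : Fin K × Fin K → ℝ := fun z => (K:ℝ)⁻¹ * pc z.2 with hqrdef
  have hKinv : ((K:ℝ≥0∞)⁻¹).toReal = (K:ℝ)⁻¹ := by
    rw [ENNReal.toReal_inv, ENNReal.toReal_natCast K]
  have hKinvpos : (0:ℝ) < (K:ℝ)⁻¹ := by
    apply inv_pos.mpr
    exact_mod_cast hK
  -- sum facts
  have hpcsum : ∑ n : Fin K, pc n = 1 := by
    have h := hpart Set.univ MeasurableSet.univ
    rw [measure_univ] at h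
    have := ENNReal.toReal_sum (s := Finset.univ)
      (f := fun n : Fin K => ℙ (Set.univ ∩ C n)) (fun n _ => measure_ne_top _ _)
    rw [← h, ENNReal.toReal_one] at this
    rw [← this.symm]
    apply Finset.sum_congr rfl
    intro n _
    rw [hpcdef]
    simp [Set.univ_inter]
  have hmarg : ∀ m, ∑ n : Fin K, pr (m, n) = (K:ℝ)⁻¹ := by
    intro m
    have h := hpart (A m) (hAm m)
    rw [hApr m] at h
    have h2 := ENNReal.toReal_sum (s := Finset.univ)
      (f := fun n : Fin K => ℙ (A m ∩ C n)) (fun n _ => measure_ne_top _ _)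
    rw [← h, hKinv] at h2
    exact h2.symm
  have hdiagsum' : ∑ m : Fin K, pr (m, m) = a := by
    have h2 := ENNReal.toReal_sum (s := Finset.univ)
      (f := fun m : Fin K => ℙ (A m ∩ C m)) (fun n _ => measure_ne_top _ _)
    rw [← hEdiag] at h2
    exact h2.symm
  -- nonnegativity / vanishing facts
  have hprnn : ∀ z : Fin K × Fin K, 0 ≤ pr z := fun z => ENNReal.toReal_nonneg
  have hpcnn : ∀ n, 0 ≤ pc n := fun n => ENNReal.toReal_nonneg
  have hqrnn : ∀ z : Fin K × Fin K, 0 ≤ qr z := fun z =>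
    mul_nonneg hKinvpos.le (hpcnn z.2)
  have hq0 : ∀ z : Fin K × Fin K, qr z = 0 → pr z = 0 := by
    intro z hz
    have hpc0 : pc z.2 = 0 := by
      rcases mul_eq_zero.1 hz with h | h
      · exact absurd h hKinvpos.ne'
      · exact h
    have hC0 : ℙ (C z.2) = 0 := by
      have := (ENNReal.toReal_eq_zero_iff _).1 hpc0
      rcases this with h | h
      · exact h
      · exact absurd h (measure_ne_top _ _)
    have : ℙ (A z.1 ∩ C z.2) = 0 :=
      le_antisymm (le_trans (measure_mono Set.inter_subset_right) hC0.le) zero_le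
    rw [hprdef]
    simp [this]
  -- rewrite the partition sum
  have hmi : miPartitionSum X Y f f = ∑ z : Fin K × Fin K, pr z * Real.log (pr z / qr z) := by
    rw [miPartitionSum, ← Finset.sum_product', Finset.univ_product_univ]
    apply Finset.sum_congr rfl
    intro z _
    have h1 : ℙ {ω | f (X ω) = z.1 ∧ f (Y ω) = z.2} = ℙ (A z.1 ∩ C z.2) := rfl
    have h2 : ℙ {ω | f (X ω) = z.1} = (K:ℝ≥0∞)⁻¹ := hApr z.1
    rw [h1, h2, hKinv]
  -- diagonal and off-diagonal pieces
  set dg : Finset (Fin K × Fin K) := Finset.univ.filter (fun z => z.1 = z.2) with hdg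
  set od : Finset (Fin K × Fin K) := Finset.univ.filter (fun z => ¬ z.1 = z.2) with hod
  have hsplitsum : ∀ F : Fin K × Fin K → ℝ,
      ∑ z ∈ dg, F z + ∑ z ∈ od, F z = ∑ z : Fin K × Fin K, F z := fun F =>
    Finset.sum_filter_add_sum_filter_not _ _ F
  have hdgsum : ∀ F : Fin K × Fin K → ℝ, ∑ z ∈ dg, F z = ∑ m : Fin K, F (m, m) := by
    intro F
    rw [hdg]
    rw [show (Finset.univ.filter (fun z : Fin K × Fin K => z.1 = z.2)) =
        Finset.univ.image (fun m => (m, m)) from ?_]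
    · rw [Finset.sum_image]
      intro m _ n _ h
      exact (Prod.ext_iff.1 h).1
    · ext z
      constructor
      · intro hz
        have h : z.1 = z.2 := (Finset.mem_filter.1 hz).2
        apply Finset.mem_image.2
        refine ⟨z.1, Finset.mem_univ _, ?_⟩
        exact Prod.ext_iff.2 ⟨rfl, h⟩
      · intro hz
        obtain ⟨m, -, rfl⟩ := Finset.mem_image.1 hz
        exact Finset.mem_filter.2 ⟨Finset.mem_univ _, rfl⟩
  have hKsum1 : ∑ _m : Fin K, (K:ℝ)⁻¹ = 1 := by
    rw [Finset.sum_const, Finset.card_univ, Fintype.card_fin, nsmul_eq_mul]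
    exact mul_inv_cancel₀ (ne_of_gt (by exact_mod_cast hK))
  have htot_p : ∑ z : Fin K × Fin K, pr z = 1 := by
    rw [← Finset.univ_product_univ, Finset.sum_product]
    rw [Finset.sum_congr rfl (fun m _ => hmarg m)]
    exact hKsum1
  have htot_q : ∑ z : Fin K × Fin K, qr z = 1 := by
    rw [← Finset.univ_product_univ, Finset.sum_product]
    have : ∀ m : Fin K, ∑ n : Fin K, qr (m, n) = (K:ℝ)⁻¹ := by
      intro m
      simp only [hqrdef]
      rw [← Finset.mul_sum, hpcsum, mul_one]
    rw [Finset.sum_congr rfl (fun m _ => this m)]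
    exact hKsum1
  have hdg_p : ∑ z ∈ dg, pr z = a := by rw [hdgsum]; exact hdiagsum'
  have hdg_q : ∑ z ∈ dg, qr z = (K:ℝ)⁻¹ := by
    rw [hdgsum]
    simp only [hqrdef]
    rw [← Finset.mul_sum, hpcsum, mul_one]
  have hod_p : ∑ z ∈ od, pr z = 1 - a := by
    have h := hsplitsum pr
    rw [htot_p, hdg_p] at h
    linarith
  have hod_q : ∑ z ∈ od, qr z = 1 - (K:ℝ)⁻¹ := by
    have h := hsplitsum qr
    rw [htot_q, hdg_q] at h
    linarith
  -- apply the log-sum inequality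
  have hls1 := log_sum_ineq dg pr qr (fun z _ => hprnn z) (fun z _ => hqrnn z)
    (fun z _ => hq0 z)
  have hls2 := log_sum_ineq od pr qr (fun z _ => hprnn z) (fun z _ => hqrnn z)
    (fun z _ => hq0 z)
  rw [hdg_p, hdg_q] at hls1
  rw [hod_p, hod_q] at hls2
  have hmain : a * Real.log (a / (K:ℝ)⁻¹) + (1 - a) * Real.log ((1 - a) / (1 - (K:ℝ)⁻¹))
      ≤ miPartitionSum X Y f f := by
    calc a * Real.log (a / (K:ℝ)⁻¹) + (1 - a) * Real.log ((1 - a) / (1 - (K:ℝ)⁻¹))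
        ≤ ∑ z ∈ dg, pr z * Real.log (pr z / qr z) +
          ∑ z ∈ od, pr z * Real.log (pr z / qr z) := add_le_add hls1 hls2
      _ = ∑ z : Fin K × Fin K, pr z * Real.log (pr z / qr z) := hsplitsum _
      _ = miPartitionSum X Y f f := hmi.symm
  -- the final real inequality
  have hKpos : (0:ℝ) < (K:ℝ) := by linarith
  have hlogK : 0 ≤ Real.log (K:ℝ) := Real.log_nonneg (by linarith)
  have halogK : (1 - 1 / D) * Real.log (K:ℝ) ≤ a * Real.log (K:ℝ) :=
    mul_le_mul_of_nonneg_right ha hlogK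
  have hKinvhalf : (K:ℝ)⁻¹ ≤ 2⁻¹ := by
    apply inv_anti₀ (by norm_num) hKr2
  have hKc : (0:ℝ) < 1 - (K:ℝ)⁻¹ := by
    have : (2:ℝ)⁻¹ < 1 := by norm_num
    linarith
  have hlog1 : Real.log (a / (K:ℝ)⁻¹) = Real.log a + Real.log (K:ℝ) := by
    rw [div_eq_mul_inv, inv_inv, Real.log_mul hapos.ne' hKpos.ne']
  have hfinal : (1 - 1 / D) * Real.log (K:ℝ) - binEnt (1 / D)
      ≤ a * Real.log (a / (K:ℝ)⁻¹) + (1 - a) * Real.log ((1 - a) / (1 - (K:ℝ)⁻¹)) := by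
    by_cases hecz : a = 1
    · rw [hecz]
      simp only [sub_self, zero_mul, add_zero, one_mul]
      rw [hecz] at hlog1
      rw [hlog1, Real.log_one, zero_add]
      nlinarith [mul_nonneg hD1'.le hlogK, hbinnonneg]
    · have hec2 : 0 < 1 - a := by
        rcases lt_or_eq_of_le ha1 with h | h
        · linarith
        · exact absurd h hecz
      rw [hlog1, Real.log_div hec2.ne' hKc.ne']
      have hbe : binEnt (1 - a) = -((1 - a) * Real.log (1 - a)) - a * Real.log a := by
        rw [binEnt, sub_sub_cancel]
      have hmono : binEnt (1 - a) ≤ binEnt (1 / D) :=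
        binEnt_mono (by linarith) (by linarith)
          (by rw [show ((2:ℝ))⁻¹ = 1 / 2 by norm_num]; linarith)
      have hlogc : Real.log (1 - (K:ℝ)⁻¹) ≤ 0 :=
        Real.log_nonpos (by linarith) (by linarith)
      have hprod : (1 - a) * Real.log (1 - (K:ℝ)⁻¹) ≤ 0 :=
        mul_nonpos_iff.mpr (Or.inl ⟨by linarith, hlogc⟩)
      nlinarith [halogK, hmono, hprod, hbe]
  -- conclude
  calc ENNReal.ofReal ((1 - 1 / D) * Real.log (K:ℝ) - binEnt (1 / D))
      ≤ ENNReal.ofReal (miPartitionSum X Y f f) :=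
        ENNReal.ofReal_le_ofReal (le_trans hfinal hmain)
    _ ≤ mutualInformation X Y := by
        rw [mutualInformation]
        exact le_iSup_of_le K (le_iSup_of_le K (le_iSup_of_le f (le_iSup_of_le f
          (le_iSup_of_le hfm (le_iSup_of_le hfm le_rfl)))))
end

section
/- The compact metric space ([0,1]^ℤ, d) with d(x,y) = Σ_{m∈ℤ} 2^{-|m|}|x_m - y_m| has tame growth of covering numbers: for every δ > 0, lim_{ε→0} ε^δ · log #([0,1]^ℤ, d, ε) = 0. In fact log #([0,1]^ℤ, d, ε) = O(|log ε|²). -/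
open MeasureTheory Real Filter Set Topology
open scoped ENNReal NNReal

/-- Minimal cardinality of a cover of `𝒳` by open sets of `ρ`-diameter less than `ε`. -/
noncomputable def coverNum (𝒳 : Type*) [TopologicalSpace 𝒳] (ρ : 𝒳 → 𝒳 → ℝ) (ε : ℝ) : ℕ :=
  sInf {N : ℕ | ∃ U : Fin N → Set 𝒳, (∀ i, IsOpen (U i)) ∧ (∀ x, ∃ i, x ∈ U i) ∧
    ∀ i, ∀ x ∈ U i, ∀ y ∈ U i, ρ x y < ε}

/-- The infinite-dimensional cube `[0,1]^ℤ`. -/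
abbrev Cube : Type := ℤ → Set.Icc (0 : ℝ) 1

/-- The metric `d(x,y) = Σ_{m ∈ ℤ} 2^{-|m|} |x_m - y_m|` on `[0,1]^ℤ`. -/
noncomputable def dCube (x y : Cube) : ℝ :=
  ∑' m : ℤ, (2 : ℝ) ^ (-|m|) * |(x m : ℝ) - (y m : ℝ)|

lemma hasSum_gfun : HasSum (fun m : ℤ => (2:ℝ) ^ (-|m|)) 3 := by
  have h1 : HasSum (fun n : ℕ => ((2:ℝ)⁻¹) ^ n) 2 := by
    have := hasSum_geometric_of_lt_one (by norm_num : (0:ℝ) ≤ 2⁻¹) (by norm_num)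
    convert this using 1; norm_num
  have hnat : HasSum (fun n : ℕ => (2:ℝ) ^ (-|(n:ℤ)|)) 2 := by
    have he : (fun n : ℕ => (2:ℝ) ^ (-|(n:ℤ)|)) = fun n : ℕ => ((2:ℝ)⁻¹) ^ n := by
      funext n
      rw [abs_of_nonneg (Int.ofNat_nonneg n), zpow_neg, zpow_natCast, inv_pow]
    rw [he]; exact h1
  have hneg : HasSum (fun n : ℕ => (2:ℝ) ^ (-|(-((n:ℤ) + 1))|)) 1 := by
    have h2 : HasSum (fun n : ℕ => (2:ℝ)⁻¹ * ((2:ℝ)⁻¹) ^ n) 1 := by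
      have h3 := h1.mul_left 2⁻¹
      rwa [(by norm_num : (2:ℝ)⁻¹ * 2 = 1)] at h3
    have he : (fun n : ℕ => (2:ℝ) ^ (-|(-((n:ℤ) + 1))|)) =
        fun n : ℕ => (2:ℝ)⁻¹ * ((2:ℝ)⁻¹) ^ n := by
      funext n
      rw [abs_neg, abs_of_nonneg (by positivity), zpow_neg, zpow_add₀ (two_ne_zero), zpow_natCast,
        zpow_one, mul_inv, inv_pow, mul_comm]
    rw [he]; exact h2
  have h := HasSum.of_nat_of_neg_add_one (f := fun m : ℤ => (2:ℝ) ^ (-|m|)) hnat hneg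
  rwa [(by norm_num : (2:ℝ) + 1 = 3)] at h

lemma summable_gfun : Summable (fun m : ℤ => (2:ℝ) ^ (-|m|)) := hasSum_gfun.summable

lemma sum_Icc_gfun (M : ℕ) :
    ∑ m ∈ Finset.Icc (-(M:ℤ)) M, (2:ℝ) ^ (-|m|) = 3 - 2 * (2:ℝ) ^ (-(M:ℤ)) := by
  induction M with
  | zero => norm_num
  | succ M ih =>
    have hset : Finset.Icc (-((M:ℤ)+1)) ((M:ℤ)+1) =
        insert (-((M:ℤ)+1)) (insert ((M:ℤ)+1) (Finset.Icc (-(M:ℤ)) M)) := by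
      ext m; simp only [Finset.mem_Icc, Finset.mem_insert]; omega
    push_cast
    rw [hset, Finset.sum_insert (by simp only [Finset.mem_insert, Finset.mem_Icc]; omega),
      Finset.sum_insert (by simp only [Finset.mem_Icc]; omega), ih]
    have e1 : |(-((M:ℤ)+1))| = (M:ℤ)+1 := by rw [abs_neg]; exact abs_of_nonneg (by positivity)
    have e2 : |((M:ℤ)+1)| = (M:ℤ)+1 := abs_of_nonneg (by positivity)
    rw [e1, e2]
    have e3 : (2:ℝ) ^ (-((M:ℤ)+1)) = (2:ℝ) ^ (-(M:ℤ)) / 2 := by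
      rw [neg_add, zpow_add₀ (two_ne_zero : (2:ℝ) ≠ 0)]; ring
    rw [e3]; ring

lemma coverNum_le_card {ι : Type} [Fintype ι] {ε : ℝ} (V : ι → Set Cube)
    (hopen : ∀ i, IsOpen (V i)) (hcov : ∀ x, ∃ i, x ∈ V i)
    (hdiam : ∀ i, ∀ x ∈ V i, ∀ y ∈ V i, dCube x y < ε) :
    coverNum Cube dCube ε ≤ Fintype.card ι := by
  apply Nat.sInf_le
  refine ⟨fun j => V ((Fintype.equivFin ι).symm j), fun i => hopen _, fun x => ?_,
    fun i => hdiam _⟩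
  obtain ⟨i, hi⟩ := hcov x
  exact ⟨Fintype.equivFin ι i, by simpa using hi⟩

lemma coverNum_le_pow (ε : ℝ) (k M : ℕ) (hk : 0 < k) (hε : 0 < ε)
    (h1 : 6 / (k:ℝ) ≤ ε/4) (h2 : 2 * (2:ℝ)^(-(M:ℤ)) ≤ ε/2) :
    coverNum Cube dCube ε ≤ (k+1)^(2*M+1) := by
  have hkR : (0:ℝ) < k := by exact_mod_cast hk
  set s : Finset ℤ := Finset.Icc (-(M:ℤ)) M with hs
  have hcard_s : s.card = 2*M+1 := by rw [hs, Int.card_Icc]; omega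
  set V : (↥s → Fin (k+1)) → Set Cube := fun f =>
    ⋂ m : ↥s, {x : Cube | |(x (m:ℤ) : ℝ) - ((f m : ℕ):ℝ) / k| < 1/k} with hV
  have hopen : ∀ f, IsOpen (V f) := by
    intro f
    apply isOpen_iInter_of_finite
    intro m
    have hc : Continuous fun x : Cube => |(x (m:ℤ) : ℝ) - ((f m : ℕ):ℝ) / k| :=
      ((continuous_subtype_val.comp (continuous_apply (m:ℤ))).sub continuous_const).abs
    exact isOpen_Iio.preimage hc
  have hcov : ∀ x, ∃ f, x ∈ V f := by
    intro x
    refine ⟨fun m => ⟨⌊(x (m:ℤ) : ℝ) * k⌋₊, ?_⟩, ?_⟩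
    · have hle : (x (m:ℤ) : ℝ) * k ≤ k := by
        have h := (x (m:ℤ)).2.2
        nlinarith
      have : ⌊(x (m:ℤ) : ℝ) * k⌋₊ ≤ k := by
        calc ⌊(x (m:ℤ) : ℝ) * k⌋₊ ≤ ⌊(k:ℝ)⌋₊ := Nat.floor_mono hle
          _ = k := Nat.floor_natCast k
      omega
    · rw [Set.mem_iInter]
      intro m
      simp only [Set.mem_setOf_eq]
      set t := (x (m:ℤ) : ℝ) with htdef
      have ht0 : 0 ≤ t := (x (m:ℤ)).2.1
      have hfl : (⌊t*k⌋₊ : ℝ) ≤ t*k := Nat.floor_le (by positivity)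
      have hfl2 : t*k < ⌊t*k⌋₊ + 1 := Nat.lt_floor_add_one _
      have hA : (⌊t*k⌋₊:ℝ)/k ≤ t := by rw [div_le_iff₀ hkR]; exact hfl
      have hB : t < ((⌊t*k⌋₊:ℝ)+1)/k := by rw [lt_div_iff₀ hkR]; exact hfl2
      have hC : ((⌊t*k⌋₊:ℝ)+1)/k = (⌊t*k⌋₊:ℝ)/k + 1/k := by ring
      rw [abs_lt]
      constructor
      · have : 0 < 1/(k:ℝ) := by positivity
        linarith
      · linarith [hC ▸ hB]
  have hdiam : ∀ f, ∀ p ∈ V f, ∀ q ∈ V f, dCube p q < ε := by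
    intro f p hp q hq
    set t : ℤ → ℝ := fun m => (2:ℝ)^(-|m|) * |(p m : ℝ) - (q m : ℝ)| with htdef
    have ht0 : ∀ m, 0 ≤ t m := fun m => by positivity
    have htg : ∀ m, t m ≤ (2:ℝ)^(-|m|) := by
      intro m
      have h1 := (p m).2
      have h2 := (q m).2
      simp only [Set.mem_Icc] at h1 h2
      have habs : |(p m:ℝ) - (q m:ℝ)| ≤ 1 := by
        rw [abs_sub_le_iff]; constructor <;> linarith [h1.1, h1.2, h2.1, h2.2]
      calc t m ≤ (2:ℝ)^(-|m|) * 1 :=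
            mul_le_mul_of_nonneg_left habs (by positivity)
        _ = (2:ℝ)^(-|m|) := mul_one _
    have hsum : Summable t := Summable.of_nonneg_of_le ht0 htg summable_gfun
    have hsplit := Summable.sum_add_tsum_compl (s := s) hsum
    have hmem : ∀ (r : Cube), r ∈ V f → ∀ m : ↥s, |(r (m:ℤ):ℝ) - ((f m : ℕ):ℝ)/k| < 1/k := by
      intro r hr m; exact Set.mem_iInter.1 hr m
    have hfin : ∑ m ∈ s, t m ≤ ε/4 := by
      have step : ∀ m ∈ s, t m ≤ (2:ℝ)^(-|m|) * (2/k) := by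
        intro m hm
        have h1 := hmem p hp ⟨m, hm⟩
        have h2 := hmem q hq ⟨m, hm⟩
        have habs : |(p m:ℝ) - (q m:ℝ)| ≤ 2/k := by
          calc |(p m:ℝ) - (q m:ℝ)|
              ≤ |(p m:ℝ) - ((f ⟨m,hm⟩ : ℕ):ℝ)/k| + |((f ⟨m,hm⟩ : ℕ):ℝ)/k - (q m:ℝ)| :=
                abs_sub_le _ _ _
            _ ≤ 1/k + 1/k := by
                rw [abs_sub_comm (((f ⟨m,hm⟩ : ℕ):ℝ)/k)]
                exact add_le_add h1.le h2.le
            _ = 2/k := by ring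
        exact mul_le_mul_of_nonneg_left habs (by positivity)
      have hpos : (0:ℝ) < (2:ℝ)^(-(M:ℤ)) := by positivity
      calc ∑ m ∈ s, t m ≤ ∑ m ∈ s, (2:ℝ)^(-|m|) * (2/k) := Finset.sum_le_sum step
        _ = (∑ m ∈ s, (2:ℝ)^(-|m|)) * (2/k) := (Finset.sum_mul _ _ _).symm
        _ = (3 - 2*(2:ℝ)^(-(M:ℤ))) * (2/k) := by rw [hs, sum_Icc_gfun]
        _ ≤ 3 * (2/k) := by
            have h5 : (0:ℝ) ≤ 2/(k:ℝ) := by positivity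
            nlinarith
        _ = 6/k := by ring
        _ ≤ ε/4 := h1
    have htail : ∑' (m : ↑((↑s : Set ℤ)ᶜ)), t m ≤ ε/2 := by
      have hle : ∑' (m : ↑((↑s:Set ℤ)ᶜ)), t m ≤ ∑' (m : ↑((↑s:Set ℤ)ᶜ)), (2:ℝ)^(-|(m:ℤ)|) :=
        Summable.tsum_le_tsum (fun m => htg m) (hsum.subtype _) (summable_gfun.subtype _)
      have h3 := Summable.sum_add_tsum_compl (s := s) summable_gfun
      rw [hasSum_gfun.tsum_eq] at h3
      have h4 : ∑ m ∈ s, (2:ℝ)^(-|m|) = 3 - 2 * (2:ℝ)^(-(M:ℤ)) := by rw [hs, sum_Icc_gfun]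
      have heq : ∑' (m : ↑((↑s:Set ℤ)ᶜ)), (2:ℝ)^(-|(m:ℤ)|) = 2 * (2:ℝ)^(-(M:ℤ)) := by
        linarith
      linarith
    have hd : dCube p q = ∑' m, t m := rfl
    calc dCube p q = ∑ m ∈ s, t m + ∑' (m : ↑((↑s:Set ℤ)ᶜ)), t m := by rw [hd, ← hsplit]
      _ ≤ ε/4 + ε/2 := add_le_add hfin htail
      _ < ε := by linarith
  calc coverNum Cube dCube ε ≤ Fintype.card (↥s → Fin (k+1)) :=
        coverNum_le_card V hopen hcov hdiam
    _ = (k+1)^(2*M+1) := by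
        rw [Fintype.card_fun, Fintype.card_fin, Fintype.card_coe, hcard_s]

set_option maxHeartbeats 1000000 in
lemma log_coverNum_le (ε : ℝ) (hε : 0 < ε) (hε' : ε < Real.exp (-10)) :
    Real.log (coverNum Cube dCube ε) ≤ 100 * (Real.log ε)^2 := by
  set k : ℕ := ⌈24/ε⌉₊ with hkdef
  set M : ℕ := ⌈Real.logb 2 (4/ε)⌉₊ with hMdef
  have hε1 : ε < 1 := lt_trans hε' (Real.exp_lt_one_iff.mpr (by norm_num))
  have hk24 : (24:ℝ)/ε ≤ k := Nat.le_ceil _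
  have hk : 0 < k := by
    rw [hkdef]; exact Nat.ceil_pos.mpr (by positivity)
  have hkR : (0:ℝ) < k := by exact_mod_cast hk
  have h1 : 6 / (k:ℝ) ≤ ε/4 := by
    rw [div_le_div_iff₀ hkR (by norm_num)]
    have h24 : ε * (24/ε) = 24 := by field_simp
    nlinarith
  have hlogb : Real.logb 2 (4/ε) ≤ M := Nat.le_ceil _
  have h2M : (4:ℝ)/ε ≤ 2^M := by
    calc (4:ℝ)/ε = 2 ^ Real.logb 2 (4/ε) :=
          (Real.rpow_logb (by norm_num) (by norm_num) (by positivity)).symm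
      _ ≤ 2 ^ (M:ℝ) := (Real.rpow_le_rpow_left_iff (by norm_num)).mpr hlogb
      _ = 2^M := by rw [Real.rpow_natCast]
  have h2 : 2 * (2:ℝ)^(-(M:ℤ)) ≤ ε/2 := by
    have hzp : (2:ℝ)^(-(M:ℤ)) = ((2:ℝ)^M)⁻¹ := by rw [zpow_neg, zpow_natCast]
    rw [hzp]
    have h4ε : (0:ℝ) < 4/ε := by positivity
    have hinv : 1/((2:ℝ)^M) ≤ 1/((4:ℝ)/ε) := one_div_le_one_div_of_le h4ε h2M
    have hdd : 1/((4:ℝ)/ε) = ε/4 := by field_simp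
    rw [hdd] at hinv
    rw [← one_div]
    linarith
  have hcover := coverNum_le_pow ε k M hk hε h1 h2
  have hlog1 : Real.log (coverNum Cube dCube ε) ≤ Real.log (((k+1)^(2*M+1) : ℕ) : ℝ) := by
    rcases Nat.eq_zero_or_pos (coverNum Cube dCube ε) with h | h
    · rw [h, Nat.cast_zero, Real.log_zero]; exact Real.log_natCast_nonneg _
    · exact Real.log_le_log (by exact_mod_cast h) (by exact_mod_cast hcover)
  have hlog2 : Real.log (((k+1)^(2*M+1) : ℕ) : ℝ) = (2*(M:ℝ)+1) * Real.log ((k:ℝ)+1) := by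
    push_cast
    rw [Real.log_pow]
    push_cast; ring
  set L : ℝ := -Real.log ε with hLdef
  have hL : 10 < L := by
    have := (Real.log_lt_iff_lt_exp hε).mpr hε'
    simp only [hLdef]; linarith
  have hlog2gt := Real.log_two_gt_d9
  have hlog2lt := Real.log_two_lt_d9
  have hMle : (M:ℝ) ≤ Real.logb 2 (4/ε) + 1 := by
    have h0 : 0 ≤ Real.logb 2 (4/ε) := by
      apply Real.logb_nonneg (by norm_num)
      rw [le_div_iff₀ hε]; linarith
    exact le_of_lt (Nat.ceil_lt_add_one h0)
  have hlog4 : Real.log 4 = 2 * Real.log 2 := by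
    rw [(by norm_num : (4:ℝ) = 2^2), Real.log_pow]; push_cast; ring
  have hlogb_eq : Real.logb 2 (4/ε) = (Real.log 4 + L)/Real.log 2 := by
    rw [Real.logb, Real.log_div (by norm_num) hε.ne', hLdef]; ring
  have hl2ne : Real.log 2 ≠ 0 := by positivity
  have hdivsplit : (Real.log 4 + L)/Real.log 2 = 2 + L / Real.log 2 := by
    rw [hlog4]; field_simp; try ring
  have hdivL : L / Real.log 2 ≤ L / 0.6931471803 :=
    div_le_div_of_nonneg_left (by linarith) (by norm_num) (le_of_lt hlog2gt)
  have hdivL2 : L / 0.6931471803 ≤ 1.45 * L := by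
    rw [div_le_iff₀ (by norm_num)]; nlinarith
  have hMleL : (M:ℝ) ≤ 2 * L := by
    have := hMle
    rw [hlogb_eq, hdivsplit] at this
    linarith
  have hkle : (k:ℝ) + 1 ≤ 32/ε := by
    have hc : (k:ℝ) < 24/ε + 1 := Nat.ceil_lt_add_one (by positivity)
    have h8 : (7:ℝ) ≤ 8/ε := by rw [le_div_iff₀ hε]; nlinarith
    have hsplit32 : (32:ℝ)/ε = 24/ε + 8/ε := by ring
    linarith
  have hlogk : Real.log ((k:ℝ)+1) ≤ 2 * L := by
    have hkpos : (0:ℝ) < (k:ℝ)+1 := by positivity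
    have hll : Real.log ((k:ℝ)+1) ≤ Real.log (32/ε) := Real.log_le_log hkpos hkle
    have h32 : Real.log (32/ε) = Real.log 32 + L := by
      rw [Real.log_div (by norm_num) hε.ne', hLdef]; ring
    have hl32 : Real.log 32 = 5 * Real.log 2 := by
      rw [(by norm_num : (32:ℝ) = 2^5), Real.log_pow]; push_cast; ring
    nlinarith
  have hlogk0 : 0 ≤ Real.log ((k:ℝ)+1) := Real.log_nonneg (by linarith)
  have hM0 : (0:ℝ) ≤ M := Nat.cast_nonneg M
  have hstep : (2*(M:ℝ)+1) * Real.log ((k:ℝ)+1) ≤ (2*(2*L)+1) * (2*L) := by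
    apply mul_le_mul (by linarith) hlogk hlogk0 (by linarith)
  calc Real.log (coverNum Cube dCube ε) ≤ (2*(M:ℝ)+1) * Real.log ((k:ℝ)+1) := by
        rw [← hlog2]; exact hlog1
    _ ≤ (2*(2*L)+1) * (2*L) := hstep
    _ ≤ 100 * L^2 := by nlinarith
    _ = 100 * (Real.log ε)^2 := by rw [hLdef]; ring

/-- `([0,1]^ℤ, d)` has tame growth of covering numbers; in fact
`log #([0,1]^ℤ, d, ε) = O(|log ε|²)`. -/
theorem cube_tame_growth :
    (∀ δ : ℝ, 0 < δ →
      Tendsto (fun ε : ℝ => ε ^ δ * Real.log (coverNum Cube dCube ε))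
        (𝓝[>] (0 : ℝ)) (𝓝 0)) ∧
    ∃ C > (0 : ℝ), ∃ ε₀ > (0 : ℝ), ∀ ε : ℝ, 0 < ε → ε < ε₀ →
      Real.log (coverNum Cube dCube ε) ≤ C * (Real.log ε) ^ 2 := by
  constructor
  · intro δ hδ
    have hmem : Set.Ioo (0:ℝ) (Real.exp (-10)) ∈ 𝓝[>] (0:ℝ) :=
      Ioo_mem_nhdsGT_of_mem ⟨le_refl _, Real.exp_pos _⟩
    apply squeeze_zero' (g := fun ε : ℝ => 100 * (Real.log ε * ε ^ (δ/2))^2)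
    · filter_upwards [hmem] with ε hε
      have h1 : (0:ℝ) ≤ ε ^ δ := Real.rpow_nonneg hε.1.le δ
      have h2 : (0:ℝ) ≤ Real.log (coverNum Cube dCube ε) := Real.log_natCast_nonneg _
      positivity
    · filter_upwards [hmem] with ε hε
      have hεpos := hε.1
      have hkey := log_coverNum_le ε hεpos hε.2
      have hsq : (ε ^ (δ/2))^2 = ε ^ δ := by
        rw [← Real.rpow_natCast (ε ^ (δ/2)) 2, ← Real.rpow_mul hεpos.le]
        norm_num
      have hexp : (Real.log ε * ε ^ (δ/2))^2 = (Real.log ε)^2 * ε ^ δ := by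
        rw [mul_pow, hsq]
      rw [hexp]
      have h1 : (0:ℝ) ≤ ε ^ δ := Real.rpow_nonneg hεpos.le δ
      nlinarith
    · have h := (tendsto_log_mul_rpow_nhdsGT_zero (half_pos hδ)).pow 2
      have h2 := h.const_mul (100:ℝ)
      simpa using h2
  · exact ⟨100, by norm_num, Real.exp (-10), Real.exp_pos _,
      fun ε hε hε' => log_coverNum_le ε hε hε'⟩
end

section
/- Every compact metrizable topological space admits a compatible metric d with tame growth of covering numbers, i.e., for every δ > 0, lim_{ε→0} ε^δ log #(𝒳, d, ε) = 0. -/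
open Real Filter Set Topology

lemma coverNum_le_pow_s10 (𝒳 : Type*) [TopologicalSpace 𝒳] (e : 𝒳 → ℕ → ℝ)
    (hcont : Continuous e) (he0 : ∀ p n, 0 ≤ e p n) (he1 : ∀ p n, e p n ≤ 1)
    (K M : ℕ) (hK : 1 ≤ K) (hM : 1 ≤ M) (ε : ℝ) (hε : 0 < ε)
    (h2K : (1/2:ℝ)^K ≤ ε/4) (hKM : 3*(K:ℝ)/(M:ℝ) ≤ ε/2) :
    coverNum 𝒳 (fun p q => ∑' n : ℕ, min ((1/2:ℝ)^n) (dist (e p n) (e q n))) ε ≤ M^K := by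
  have hMR : (0:ℝ) < (M:ℝ) := by exact_mod_cast hM
  -- the basic cells
  set V : (Fin K → Fin M) → Set 𝒳 := fun v =>
    {p | ∀ n : Fin K, |e p (n:ℕ) - ((v n : ℕ):ℝ)/(M:ℝ)| < 3/(2*(M:ℝ))} with hV
  have hopen : ∀ v, IsOpen (V v) := by
    intro v
    have : V v = ⋂ n : Fin K,
        {p | |e p (n:ℕ) - ((v n : ℕ):ℝ)/(M:ℝ)| < 3/(2*(M:ℝ))} := by
      ext p; simp [hV]
    rw [this]
    refine isOpen_iInter_of_finite fun n => ?_
    exact isOpen_lt (((continuous_apply (n:ℕ)).comp hcont).sub continuous_const).abs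
      continuous_const
  have hcover : ∀ p, ∃ v, p ∈ V v := by
    intro p
    refine ⟨fun n => ⟨min ⌊e p (n:ℕ) * M⌋₊ (M-1),
      lt_of_le_of_lt (min_le_right _ _) (by omega)⟩, ?_⟩
    intro n
    set a := e p (n:ℕ) with ha
    have ha0 : 0 ≤ a := he0 _ _
    have ha1 : a ≤ 1 := he1 _ _
    set j : ℕ := min ⌊a * M⌋₊ (M-1) with hj
    have hcast : ((M - 1 : ℕ) : ℝ) = (M:ℝ) - 1 := by
      rw [Nat.cast_sub hM]; norm_num
    have hjle : (j:ℝ) ≤ a * M := by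
      rcases min_cases ⌊a * M⌋₊ (M-1) with ⟨h1, _⟩ | ⟨h1, h2⟩
      · rw [hj, h1]; exact Nat.floor_le (by positivity)
      · rw [hj, h1, hcast]
        have hMf : M ≤ ⌊a * M⌋₊ := by omega
        have h3 : (M:ℝ) ≤ (⌊a * M⌋₊:ℝ) := by exact_mod_cast hMf
        have h4 := Nat.floor_le (show (0:ℝ) ≤ a * M by positivity)
        linarith
    have hjge : a * M ≤ (j:ℝ) + 1 := by
      rcases min_cases ⌊a * M⌋₊ (M-1) with ⟨h1, _⟩ | ⟨h1, _⟩
      · rw [hj, h1]; exact le_of_lt (Nat.lt_floor_add_one _)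
      · rw [hj, h1, hcast]; nlinarith
    have habs : |a - (j:ℝ)/(M:ℝ)| ≤ 1/(M:ℝ) := by
      have hup : a ≤ ((j:ℝ)+1)/(M:ℝ) := by rw [le_div_iff₀ hMR]; linarith
      have hlo : (j:ℝ)/(M:ℝ) ≤ a := by rw [div_le_iff₀ hMR]; linarith
      have hdiff : ((j:ℝ)+1)/(M:ℝ) - (j:ℝ)/(M:ℝ) = 1/(M:ℝ) := by field_simp; ring
      rw [abs_le]
      constructor
      · have h0M : (0:ℝ) ≤ 1/(M:ℝ) := by positivity
        linarith
      · linarith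
    calc |e p (n:ℕ) - (j:ℝ)/(M:ℝ)| ≤ 1/(M:ℝ) := habs
      _ < 3/(2*(M:ℝ)) := by rw [div_lt_div_iff₀ hMR (by positivity)]; nlinarith
  have hdiam : ∀ v, ∀ p ∈ V v, ∀ q ∈ V v,
      (∑' n : ℕ, min ((1/2:ℝ)^n) (dist (e p n) (e q n))) < ε := by
    intro v p hp q hq
    set f : ℕ → ℝ := fun n => min ((1/2:ℝ)^n) (dist (e p n) (e q n)) with hf
    have hfnn : ∀ n, 0 ≤ f n := fun n => le_min (by positivity) dist_nonneg
    have hfs : Summable f :=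
      Summable.of_nonneg_of_le hfnn (fun n => min_le_left _ _) summable_geometric_two
    have hsplit : (∑ i ∈ Finset.range K, f i) + ∑' i, f (i + K) = ∑' i, f i :=
      Summable.sum_add_tsum_nat_add K hfs
    have hhead : (∑ i ∈ Finset.range K, f i) < ε/2 := by
      have hlt : ∀ i ∈ Finset.range K, f i < 3/(M:ℝ) := by
        intro i hi
        rw [Finset.mem_range] at hi
        have h1 := hp ⟨i, hi⟩
        have h2 := hq ⟨i, hi⟩
        simp only [hV, mem_setOf_eq] at h1 h2
        have : dist (e p i) (e q i) < 3/(M:ℝ) := by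
          rw [Real.dist_eq]
          calc |e p i - e q i| ≤ |e p i - ((v ⟨i, hi⟩ : ℕ):ℝ)/(M:ℝ)|
                + |((v ⟨i, hi⟩ : ℕ):ℝ)/(M:ℝ) - e q i| := abs_sub_le _ _ _
            _ = |e p i - ((v ⟨i, hi⟩ : ℕ):ℝ)/(M:ℝ)|
                + |e q i - ((v ⟨i, hi⟩ : ℕ):ℝ)/(M:ℝ)| := by
                rw [abs_sub_comm (((v ⟨i, hi⟩ : ℕ):ℝ)/(M:ℝ))]
            _ < 3/(2*(M:ℝ)) + 3/(2*(M:ℝ)) := add_lt_add h1 h2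
            _ = 3/(M:ℝ) := by field_simp; ring
        exact lt_of_le_of_lt (min_le_right _ _) this
      calc (∑ i ∈ Finset.range K, f i) < ∑ i ∈ Finset.range K, 3/(M:ℝ) :=
          Finset.sum_lt_sum_of_nonempty (by simp [Finset.nonempty_range_iff]; omega) hlt
        _ = (K:ℝ) * (3/(M:ℝ)) := by rw [Finset.sum_const, Finset.card_range]; ring
        _ ≤ ε/2 := by
            have : (K:ℝ) * (3/(M:ℝ)) = 3*(K:ℝ)/(M:ℝ) := by ring
            linarith [hKM]
    have htail : (∑' i, f (i + K)) ≤ ε/2 := by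
      have h1 : ∀ i, f (i + K) ≤ (1/2:ℝ)^K * (1/2:ℝ)^i := by
        intro i
        calc f (i + K) ≤ (1/2:ℝ)^(i+K) := min_le_left _ _
          _ = (1/2:ℝ)^K * (1/2:ℝ)^i := by rw [pow_add]; ring
      calc (∑' i, f (i + K)) ≤ ∑' i, (1/2:ℝ)^K * (1/2:ℝ)^i :=
          Summable.tsum_le_tsum h1 ((summable_nat_add_iff K).2 hfs) (summable_geometric_two.mul_left _)
        _ = (1/2:ℝ)^K * 2 := by rw [tsum_mul_left, tsum_geometric_two]
        _ ≤ ε/2 := by linarith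
    linarith [hsplit ▸ add_lt_add_of_lt_of_le hhead htail]
  -- assemble
  have hcard : Fintype.card (Fin K → Fin M) = M ^ K := by simp
  apply Nat.sInf_le
  refine ⟨fun i => V ((Fintype.equivFinOfCardEq hcard).symm i), ?_, ?_, ?_⟩
  · intro i; exact hopen _
  · intro x
    obtain ⟨v, hv⟩ := hcover x
    exact ⟨Fintype.equivFinOfCardEq hcard v, by simpa using hv⟩
  · intro i x hx y hy
    exact hdiam _ _ hx _ hy

/-- Every compact metrizable space admits a compatible metric with tame growth of
covering numbers: for every `δ > 0`, `ε^δ log #(𝒳, d, ε) → 0` as `ε → 0`. -/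
theorem exists_metric_tame_growth (𝒳 : Type*) [t : TopologicalSpace 𝒳]
    [CompactSpace 𝒳] [TopologicalSpace.MetrizableSpace 𝒳] :
    ∃ m : MetricSpace 𝒳,
      m.toUniformSpace.toTopologicalSpace = t ∧
      ∀ δ : ℝ, 0 < δ →
        Tendsto (fun ε : ℝ =>
            ε ^ δ * Real.log (coverNum 𝒳 (fun x y => @dist 𝒳 m.toDist x y) ε))
          (𝓝[>] (0 : ℝ)) (𝓝 0) := by
  rcases isEmpty_or_nonempty 𝒳 with hemp | hne
  · letI m0 : MetricSpace 𝒳 := TopologicalSpace.metrizableSpaceMetric 𝒳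
    refine ⟨m0, rfl, fun δ hδ => ?_⟩
    have hc : ∀ ε : ℝ, coverNum 𝒳 (fun x y => @dist 𝒳 m0.toDist x y) ε = 0 := by
      intro ε
      refine Nat.sInf_eq_zero.2 (Or.inl ?_)
      exact ⟨Fin.elim0, fun i => i.elim0, fun x => (IsEmpty.false x).elim, fun i => i.elim0⟩
    simp only [hc, Nat.cast_zero, Real.log_zero, mul_zero]
    exact tendsto_const_nhds
  · letI m0 : MetricSpace 𝒳 := TopologicalSpace.metrizableSpaceMetric 𝒳
    set z : ℕ → 𝒳 := TopologicalSpace.denseSeq 𝒳 with hz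
    have hzd : DenseRange z := TopologicalSpace.denseRange_denseSeq 𝒳
    set e : 𝒳 → ℕ → ℝ := fun p n => min (dist p (z n)) 1 with he
    have he0 : ∀ p n, 0 ≤ e p n := fun p n => le_min dist_nonneg zero_le_one
    have he1 : ∀ p n, e p n ≤ 1 := fun p n => min_le_right _ _
    have hcont : Continuous e := by
      refine continuous_pi fun n => ?_
      exact ((continuous_id.dist continuous_const)).min continuous_const
    have hinj : Function.Injective e := by
      intro p q hpq
      have h0 : ∀ r : ℝ, 0 < r → dist p q < 2 * r := by
        intro r hr
        obtain ⟨n, hn⟩ := hzd.exists_dist_lt p (show (0:ℝ) < min r 1 by positivity)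
        have hpn : dist p (z n) < min r 1 := hn
        have h1 : e p n = e q n := congrFun hpq n
        have h2 : e p n = dist p (z n) := by
          simp only [he]
          exact min_eq_left (le_of_lt (lt_of_lt_of_le hpn (min_le_right _ _)))
        have h3 : min (dist q (z n)) 1 = dist p (z n) := by rw [← h2, h1]
        have h4 : dist q (z n) < min r 1 := by
          have hlt1 : min (dist q (z n)) 1 < 1 := by
            rw [h3]; exact lt_of_lt_of_le hpn (min_le_right _ _)
          have hq1 : dist q (z n) < 1 := by
            by_contra hcon; push_neg at hcon
            rw [min_eq_right hcon] at hlt1; exact lt_irrefl _ hlt1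
          rw [min_eq_left hq1.le] at h3
          rw [h3]; exact hpn
        calc dist p q ≤ dist p (z n) + dist (z n) q := dist_triangle _ _ _
          _ = dist p (z n) + dist q (z n) := by rw [dist_comm (z n) q]
          _ < min r 1 + min r 1 := by linarith
          _ ≤ 2 * r := by have := min_le_left r 1; linarith
      have : dist p q ≤ 0 := by
        by_contra hc
        push_neg at hc
        have := h0 (dist p q / 4) (by linarith)
        linarith
      exact dist_le_zero.mp this
    letI mpi : MetricSpace (ℕ → ℝ) := PiCountable.metricSpace
    have hce : IsClosedEmbedding e := hcont.isClosedEmbedding hinj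
    letI m : MetricSpace 𝒳 := hce.isEmbedding.comapMetricSpace e
    refine ⟨m, rfl, fun δ hδ => ?_⟩
    have hdd : (fun x y => @dist 𝒳 m.toDist x y)
        = fun p q => ∑' n : ℕ, min ((1/2:ℝ)^n) (dist (e p n) (e q n)) := by
      funext p q
      show dist (e p) (e q) = _
      rw [PiCountable.dist_eq_tsum]
      simp only [Encodable.encode_nat, one_div]
    rw [hdd]
    set ρ : 𝒳 → 𝒳 → ℝ := fun p q => ∑' n : ℕ, min ((1/2:ℝ)^n) (dist (e p n) (e q n)) with hρ
    -- squeeze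
    have hg : Tendsto (fun ε : ℝ => 36 * (Real.log ε * ε ^ (δ/2))^2) (𝓝[>] (0:ℝ)) (𝓝 0) := by
      have h := tendsto_log_mul_rpow_nhdsGT_zero (half_pos hδ)
      have h2 := (h.pow 2).const_mul (36:ℝ)
      simpa using h2
    have hev : ∀ᶠ ε in 𝓝[>] (0:ℝ),
        0 ≤ ε ^ δ * Real.log (coverNum 𝒳 ρ ε) ∧
        ε ^ δ * Real.log (coverNum 𝒳 ρ ε) ≤ 36 * (Real.log ε * ε ^ (δ/2))^2 := by
      have ev1 : ∀ᶠ ε in 𝓝[>] (0:ℝ), 0 < ε := self_mem_nhdsWithin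
      have ev2 : ∀ᶠ ε in 𝓝[>] (0:ℝ), ε < 1/2 :=
        (eventually_lt_nhds (by norm_num : (0:ℝ) < 1/2)).filter_mono nhdsWithin_le_nhds
      have ev3 : ∀ᶠ ε in 𝓝[>] (0:ℝ), Real.log ε ≤ -4 :=
        Real.tendsto_log_nhdsGT_zero.eventually (eventually_le_atBot (-4))
      filter_upwards [ev1, ev2, ev3] with ε hε hε2 hε4
      set L : ℝ := -Real.log ε with hL
      have hL4 : 4 ≤ L := by simp only [hL]; linarith
      have hLpos : 0 < L := by linarith
      set K : ℕ := ⌈Real.logb 2 (4/ε)⌉₊ with hK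
      set M : ℕ := ⌈6*(K:ℝ)/ε⌉₊ + 1 with hM
      have hlogbnn : 0 ≤ Real.logb 2 (4/ε) := by
        apply Real.logb_nonneg (by norm_num)
        rw [le_div_iff₀ hε]; linarith
      have hK1 : 1 ≤ K := by
        rw [hK, Nat.one_le_ceil_iff]
        apply Real.logb_pos (by norm_num)
        rw [lt_div_iff₀ hε]; linarith
      have hM1 : 1 ≤ M := by omega
      have hMR : (0:ℝ) < (M:ℝ) := by exact_mod_cast hM1
      have h2K : (1/2:ℝ)^K ≤ ε/4 := by
        have h1 : Real.logb 2 (4/ε) ≤ (K:ℝ) := Nat.le_ceil _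
        have h2 : (4/ε : ℝ) ≤ 2^(K:ℝ) := by
          calc (4/ε:ℝ) = (2:ℝ) ^ Real.logb 2 (4/ε) :=
              (Real.rpow_logb (by norm_num) (by norm_num) (by positivity)).symm
            _ ≤ 2^(K:ℝ) := by
              apply Real.rpow_le_rpow_left_iff (by norm_num : (1:ℝ) < 2) |>.2 h1
        rw [Real.rpow_natCast] at h2
        have h2pow : (0:ℝ) < 2^K := by positivity
        rw [div_pow, one_pow, div_le_div_iff₀ h2pow (by norm_num : (0:ℝ) < 4)]
        rw [div_le_iff₀ hε] at h2
        nlinarith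
      have hKM : 3*(K:ℝ)/(M:ℝ) ≤ ε/2 := by
        have h1 : 6*(K:ℝ)/ε ≤ (M:ℝ) := by
          rw [hM]; push_cast
          have := Nat.le_ceil (6*(K:ℝ)/ε)
          linarith
        rw [div_le_div_iff₀ hMR (by norm_num : (0:ℝ) < 2)]
        rw [div_le_iff₀ hε] at h1
        nlinarith
      have hcb := coverNum_le_pow_s10 𝒳 e hcont he0 he1 K M hK1 hM1 ε hε h2K hKM
      have hKL : (K:ℝ) ≤ 4*L := by
        have h1 : (K:ℝ) < Real.logb 2 (4/ε) + 1 := by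
          rw [hK]; exact Nat.ceil_lt_add_one hlogbnn
        have h2 : Real.logb 2 (4/ε) = (Real.log 4 + L) / Real.log 2 := by
          rw [Real.logb, Real.log_div (by norm_num) (ne_of_gt hε)]
          rw [hL]; ring_nf
        have h4 : Real.log 4 = 2 * Real.log 2 := by
          rw [show (4:ℝ) = 2^2 by norm_num, Real.log_pow]; push_cast; ring
        have hl2a := Real.log_two_gt_d9
        have hl2b := Real.log_two_lt_d9
        rw [h2, h4] at h1
        have hl2pos : (0:ℝ) < Real.log 2 := by linarith
        have h1' : (K:ℝ) - 1 < (2*Real.log 2 + L)/Real.log 2 := by linarith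
        rw [lt_div_iff₀ hl2pos] at h1'
        nlinarith
      have hML : (M:ℝ) ≤ 26*L/ε := by
        have h1 : (M:ℝ) < 6*(K:ℝ)/ε + 2 := by
          rw [hM]; push_cast
          have := Nat.ceil_lt_add_one (show (0:ℝ) ≤ 6*(K:ℝ)/ε by positivity)
          linarith
        have h3 : (6*(K:ℝ)/ε) * ε = 6*(K:ℝ) := by field_simp
        have h4 : (M:ℝ)*ε < 6*(K:ℝ) + 2*ε := by
          have := mul_lt_mul_of_pos_right h1 hε
          rw [add_mul, h3] at this
          linarith
        rw [le_div_iff₀ hε]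
        nlinarith
      have hlogM : Real.log M ≤ 9*L := by
        have h0 : Real.log M ≤ Real.log (26*L/ε) := Real.log_le_log hMR hML
        have h1 : Real.log (26*L/ε) = Real.log 26 + Real.log L - Real.log ε := by
          rw [Real.log_div (by positivity) (ne_of_gt hε),
            Real.log_mul (by norm_num) (ne_of_gt hLpos)]
        have h2 : Real.log 26 ≤ 25 := by
          have := Real.log_le_sub_one_of_pos (show (0:ℝ) < 26 by norm_num); linarith
        have h3 : Real.log L ≤ L - 1 := Real.log_le_sub_one_of_pos hLpos
        have h4 : Real.log ε = -L := by rw [hL]; ring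
        rw [h1, h4] at h0
        linarith
      have hlogM0 : 0 ≤ Real.log M := Real.log_natCast_nonneg M
      have hCov0 : 0 ≤ Real.log (coverNum 𝒳 ρ ε) := Real.log_natCast_nonneg _
      have hlogC : Real.log (coverNum 𝒳 ρ ε) ≤ 36*L^2 := by
        have hcle : ((coverNum 𝒳 ρ ε : ℕ):ℝ) ≤ (M:ℝ)^K := by
          have h6 : ((coverNum 𝒳 ρ ε : ℕ):ℝ) ≤ ((M^K : ℕ):ℝ) := Nat.cast_le.2 hcb
          rwa [Nat.cast_pow] at h6
        rcases Nat.eq_zero_or_pos (coverNum 𝒳 ρ ε) with h0 | hpos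
        · rw [h0]
          simp only [Nat.cast_zero, Real.log_zero]
          positivity
        · have h5 : Real.log (coverNum 𝒳 ρ ε) ≤ Real.log ((M:ℝ)^K) :=
            Real.log_le_log (by exact_mod_cast hpos) hcle
          rw [Real.log_pow] at h5
          calc Real.log ((coverNum 𝒳 ρ ε : ℕ):ℝ) ≤ (K:ℝ) * Real.log M := h5
            _ ≤ (4*L) * (9*L) := mul_le_mul hKL hlogM hlogM0 (by positivity)
            _ = 36*L^2 := by ring
      constructor
      · exact mul_nonneg (Real.rpow_nonneg hε.le δ) hCov0
      · have hsq : ε^(δ/2) * ε^(δ/2) = ε^δ := by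
          rw [← Real.rpow_add hε]; norm_num
        have hlog : Real.log ε = -L := by rw [hL]; ring
        have hrw : 36 * (Real.log ε * ε^(δ/2))^2 = 36 * L^2 * ε^δ := by
          rw [mul_pow, ← hsq, hlog]; ring
        rw [hrw]
        calc ε^δ * Real.log ((coverNum 𝒳 ρ ε : ℕ):ℝ)
            ≤ ε^δ * (36*L^2) :=
              mul_le_mul_of_nonneg_left hlogC (Real.rpow_nonneg hε.le δ)
          _ = 36*L^2*ε^δ := by ring
    exact squeeze_zero' (hev.mono fun ε h => h.1) (hev.mono fun ε h => h.2) hg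
end

section
/- Let (𝒳, T, d) be a dynamical system with compact metric space 𝒳. For every ε > 0 and every T-invariant Borel probability measure μ on 𝒳, the rate distortion function satisfies R_μ(ε) ≤ S̃(𝒳,T,d,ε) ≤ S(𝒳,T,d,ε), where S̃(𝒳,T,d,ε) = lim_{n→∞} (1/n) log #(𝒳, d̄_n, ε) and S(𝒳,T,d,ε) = lim_{n→∞} (1/n) log #(𝒳, d_n, ε). -/
open MeasureTheory ProbabilityTheory Real Filter Set Topology
open scoped ENNReal NNReal

/-- `d_n(x,y) = max_{0 ≤ k < n} d(T^k x, T^k y)`. -/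
noncomputable def bowenMax {𝒳 : Type*} [PseudoMetricSpace 𝒳] (T : 𝒳 → 𝒳) (n : ℕ)
    (x y : 𝒳) : ℝ :=
  (((Finset.range n).sup fun k => nndist (T^[k] x) (T^[k] y)) : ℝ≥0)

/-- `d̄_n(x,y) = (1/n) Σ_{k=0}^{n-1} d(T^k x, T^k y)`. -/
noncomputable def bowenAvg {𝒳 : Type*} [PseudoMetricSpace 𝒳] (T : 𝒳 → 𝒳) (n : ℕ)
    (x y : 𝒳) : ℝ :=
  (∑ k ∈ Finset.range n, dist (T^[k] x) (T^[k] y)) / n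

/-- The rate distortion function `R_μ(ε)`: the infimum of `I(X;Y)/n` over `n ≥ 1` and
random variables `X` (with law `μ`) and `Y = (Y_0, …, Y_{n-1})` on some probability
space satisfying `E[(1/n) Σ_k d(T^k X, Y_k)] < ε`. -/
noncomputable def rateDistortion (𝒳 : Type*) [MetricSpace 𝒳] [MeasurableSpace 𝒳]
    (T : 𝒳 → 𝒳) (μ : Measure 𝒳) (ε : ℝ) : ℝ≥0∞ :=
  sInf {r : ℝ≥0∞ | ∃ (n : ℕ), 0 < n ∧ ∃ (Ω : Type) (_ : MeasureSpace Ω),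
    IsProbabilityMeasure (ℙ : Measure Ω) ∧ ∃ (X : Ω → 𝒳) (Y : Ω → Fin n → 𝒳),
      Measurable X ∧ Measurable Y ∧ Measure.map X ℙ = μ ∧
      (∫ ω, (∑ k : Fin n, dist (T^[(k : ℕ)] (X ω)) (Y ω k)) / n ∂ℙ) < ε ∧
      r = mutualInformation X Y / n}

lemma mi_term_le {p pm q : ℝ} (hp : 0 ≤ p) (h1 : p ≤ pm) (h2 : p ≤ q) :
    p * Real.log (p / (pm * q)) ≤ p * (-Real.log q) := by
  rcases eq_or_lt_of_le hp with h0 | h0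
  · simp [← h0]
  · have hpm : 0 < pm := lt_of_lt_of_le h0 h1
    have hq : 0 < q := lt_of_lt_of_le h0 h2
    have hlog : Real.log (p / (pm * q)) ≤ -Real.log q := by
      rw [Real.log_div (ne_of_gt h0) (by positivity),
        Real.log_mul (ne_of_gt hpm) (ne_of_gt hq)]
      have := Real.log_le_log h0 h1
      linarith
    exact mul_le_mul_of_nonneg_left hlog hp

lemma entropy_le_log {N' N : ℕ} (hN : 0 < N) (q : Fin N' → ℝ) (hq0 : ∀ j, 0 ≤ q j)
    (hsum : ∑ j, q j = 1) (w : Fin N → Fin N')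
    (hsupp : ∀ j, 0 < q j → ∃ i, w i = j) :
    ∑ j, q j * (-Real.log (q j)) ≤ Real.log N := by
  classical
  set T := Finset.univ.filter (fun j => 0 < q j) with hT
  have hq0' : ∀ j, j ∉ T → q j = 0 := fun j hj =>
    le_antisymm (not_lt.1 (by simpa [hT] using hj)) (hq0 j)
  have hcard : T.card ≤ N := by
    have hsub : T ⊆ Finset.image w Finset.univ := fun j hj => by
      obtain ⟨i, hi⟩ := hsupp j (Finset.mem_filter.mp hj).2
      exact Finset.mem_image.mpr ⟨i, Finset.mem_univ i, hi⟩
    calc T.card ≤ _ := Finset.card_le_card hsub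
      _ ≤ (Finset.univ : Finset (Fin N)).card := Finset.card_image_le
      _ = N := by simp
  have hsum' : ∑ j ∈ T, q j = 1 := by
    rw [Finset.sum_subset (Finset.subset_univ T) (fun j _ hj => hq0' j hj)]
    exact hsum
  have hmain : ∑ j, q j * (-Real.log (q j)) = ∑ j ∈ T, q j * (-Real.log (q j)) := by
    symm
    exact Finset.sum_subset (Finset.subset_univ T) fun j _ hj => by simp [hq0' j hj]
  rw [hmain]
  have hNR : (0:ℝ) < N := by exact_mod_cast hN
  have hterm : ∀ j ∈ T, q j * (-Real.log (q j)) ≤ (1/N - q j) + q j * Real.log N := by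
    intro j hj
    have hqj : 0 < q j := (Finset.mem_filter.mp hj).2
    have h1 : Real.log (1/(N * q j)) ≤ 1/(N * q j) - 1 :=
      Real.log_le_sub_one_of_pos (by positivity)
    have h2 : Real.log (1/(N * q j)) = -Real.log N - Real.log (q j) := by
      rw [one_div, Real.log_inv, Real.log_mul (ne_of_gt hNR) (ne_of_gt hqj)]
      ring
    have h3 := mul_le_mul_of_nonneg_left h1 hqj.le
    rw [h2] at h3
    have hq : q j * (1/(N * q j) - 1) = 1/N - q j := by field_simp
    nlinarith
  calc ∑ j ∈ T, q j * (-Real.log (q j)) ≤ ∑ j ∈ T, ((1/N - q j) + q j * Real.log N) :=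
        Finset.sum_le_sum hterm
    _ = T.card * (1/N) - 1 + Real.log N := by
        rw [Finset.sum_add_distrib, ← Finset.sum_mul, hsum', Finset.sum_sub_distrib, hsum']
        simp [Finset.sum_const]
    _ ≤ Real.log N := by
        have h4 : (T.card : ℝ) * (1/N) ≤ 1 := by
          rw [mul_one_div, div_le_one hNR]
          exact_mod_cast hcard
        linarith

lemma nonempty_of_prob {Ω : Type*} [MeasureSpace Ω] [IsProbabilityMeasure (ℙ : Measure Ω)] :
    Nonempty Ω := by
  by_contra h
  rw [not_nonempty_iff] at h
  have h1 : (ℙ : Measure Ω) univ = 1 := measure_univ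
  rw [Set.univ_eq_empty_iff.mpr h, measure_empty] at h1
  exact zero_ne_one h1

lemma sum_measure_fiber_le {Ω : Type*} [MeasureSpace Ω] {M : ℕ} {φ : Ω → Fin M}
    (hφ : Measurable φ) (B : Set Ω) (hB : MeasurableSet B) :
    ∑ m : Fin M, ℙ ({ω | φ ω = m} ∩ B) ≤ ℙ B := by
  have hmeas : ∀ m : Fin M, MeasurableSet {ω | φ ω = m} := fun m =>
    hφ (measurableSet_singleton m)
  rw [← tsum_fintype (L := .unconditional _), ← measure_iUnion ?_ (fun m => (hmeas m).inter hB)]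
  · exact measure_mono (iUnion_subset fun m => inter_subset_right)
  · intro i j hij
    refine Disjoint.mono inter_subset_left inter_subset_left (disjoint_left.mpr ?_)
    intro ω hi hj
    exact hij ((hi : φ ω = i).symm.trans hj)

lemma sum_measure_fiber_eq {Ω : Type*} [MeasureSpace Ω] [IsProbabilityMeasure (ℙ : Measure Ω)]
    {M : ℕ} {φ : Ω → Fin M} (hφ : Measurable φ) :
    ∑ m : Fin M, ℙ {ω | φ ω = m} = 1 := by
  have hmeas : ∀ m : Fin M, MeasurableSet {ω | φ ω = m} := fun m =>
    hφ (measurableSet_singleton m)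
  rw [← tsum_fintype (L := .unconditional _), ← measure_iUnion ?_ hmeas]
  · have h : (⋃ m, {ω | φ ω = m}) = univ := eq_univ_of_forall fun ω => mem_iUnion.mpr ⟨φ ω, rfl⟩
    rw [h, measure_univ]
  · intro i j hij
    refine disjoint_left.mpr fun ω hi hj => hij ((hi : φ ω = i).symm.trans hj)

lemma miPartitionSum_le {Ω 𝒳 𝒴 : Type*} [MeasureSpace Ω] [IsProbabilityMeasure (ℙ : Measure Ω)]
    [MeasurableSpace 𝒳] [MeasurableSpace 𝒴]
    {X : Ω → 𝒳} {Y : Ω → 𝒴} (hX : Measurable X) (hY : Measurable Y)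
    {N : ℕ} (v : Fin N → 𝒴) (hcov : ∀ ω, ∃ i, Y ω = v i)
    {M N' : ℕ} (f : 𝒳 → Fin M) (g : 𝒴 → Fin N') (hf : Measurable f) (hg : Measurable g) :
    miPartitionSum X Y f g ≤ Real.log N := by
  classical
  have hgY : Measurable (fun ω => g (Y ω)) := hg.comp hY
  have hfX : Measurable (fun ω => f (X ω)) := hf.comp hX
  set q : Fin N' → ℝ := fun j => (ℙ {ω | g (Y ω) = j}).toReal with hqdef
  have hq0 : ∀ j, 0 ≤ q j := fun j => ENNReal.toReal_nonneg
  have hq1 : ∀ j, q j ≤ 1 := fun j => by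
    have := ENNReal.toReal_mono ENNReal.one_ne_top
      (prob_le_one (μ := (ℙ : Measure Ω)) (s := {ω | g (Y ω) = j}))
    simpa using this
  have hN : 0 < N := by
    obtain ⟨ω₀⟩ := nonempty_of_prob (Ω := Ω)
    obtain ⟨i, _⟩ := hcov ω₀
    exact i.pos
  have step1 : miPartitionSum X Y f g ≤ ∑ j : Fin N', q j * (-Real.log (q j)) := by
    rw [miPartitionSum]
    calc (∑ m : Fin M, ∑ j : Fin N',
        (ℙ {ω | f (X ω) = m ∧ g (Y ω) = j}).toReal *
          Real.log ((ℙ {ω | f (X ω) = m ∧ g (Y ω) = j}).toReal /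
            ((ℙ {ω | f (X ω) = m}).toReal * (ℙ {ω | g (Y ω) = j}).toReal)))
        ≤ ∑ m : Fin M, ∑ j : Fin N',
            (ℙ {ω | f (X ω) = m ∧ g (Y ω) = j}).toReal * (-Real.log (q j)) := by
          refine Finset.sum_le_sum fun m _ => Finset.sum_le_sum fun j _ => ?_
          apply mi_term_le ENNReal.toReal_nonneg
          · exact ENNReal.toReal_mono (measure_ne_top _ _) (measure_mono fun ω h => h.1)
          · exact ENNReal.toReal_mono (measure_ne_top _ _) (measure_mono fun ω h => h.2)
      _ = ∑ j : Fin N',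
            (∑ m : Fin M, (ℙ {ω | f (X ω) = m ∧ g (Y ω) = j}).toReal) * (-Real.log (q j)) := by
          rw [Finset.sum_comm]
          simp [Finset.sum_mul]
      _ ≤ ∑ j : Fin N', q j * (-Real.log (q j)) := by
          refine Finset.sum_le_sum fun j _ => mul_le_mul_of_nonneg_right ?_ ?_
          · have hle := sum_measure_fiber_le hfX {ω | g (Y ω) = j}
              (hgY (measurableSet_singleton j))
            have heq : ∀ m : Fin M, {ω | f (X ω) = m ∧ g (Y ω) = j} =
                {ω | f (X ω) = m} ∩ {ω | g (Y ω) = j} := fun m => rfl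
            calc (∑ m : Fin M, (ℙ {ω | f (X ω) = m ∧ g (Y ω) = j}).toReal)
                = (∑ m : Fin M, ℙ {ω | f (X ω) = m ∧ g (Y ω) = j}).toReal :=
                  (ENNReal.toReal_sum fun m _ => measure_ne_top _ _).symm
              _ ≤ q j := by
                  refine ENNReal.toReal_mono (measure_ne_top _ _) ?_
                  simpa [heq] using hle
          · simpa using Real.log_nonpos (hq0 j) (hq1 j)
  refine le_trans step1 (entropy_le_log hN q hq0 ?_ (g ∘ v) ?_)
  · have h := sum_measure_fiber_eq hgY
    calc ∑ j, q j = (∑ j, ℙ {ω | g (Y ω) = j}).toReal :=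
        (ENNReal.toReal_sum fun j _ => measure_ne_top _ _).symm
      _ = 1 := by rw [h, ENNReal.toReal_one]
  · intro j hj
    have hne : {ω | g (Y ω) = j}.Nonempty := by
      rw [nonempty_iff_ne_empty]
      intro hempty
      rw [hqdef] at hj
      simp only [hempty, measure_empty] at hj
      simp at hj
    obtain ⟨ω, hω⟩ := hne
    obtain ⟨i, hi⟩ := hcov ω
    exact ⟨i, by rw [Function.comp_apply, ← hi]; exact hω⟩

lemma mutualInformation_le_log {Ω 𝒳 𝒴 : Type*} [MeasureSpace Ω]
    [IsProbabilityMeasure (ℙ : Measure Ω)] [MeasurableSpace 𝒳] [MeasurableSpace 𝒴]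
    {X : Ω → 𝒳} {Y : Ω → 𝒴} (hX : Measurable X) (hY : Measurable Y)
    {N : ℕ} (v : Fin N → 𝒴) (hcov : ∀ ω, ∃ i, Y ω = v i) :
    mutualInformation X Y ≤ ENNReal.ofReal (Real.log N) := by
  refine iSup_le fun M => iSup_le fun N' => iSup_le fun f => iSup_le fun g =>
    iSup_le fun hf => iSup_le fun hg => ?_
  exact ENNReal.ofReal_le_ofReal (miPartitionSum_le hX hY v hcov f g hf hg)

section BowenLemmas

variable {𝒳 : Type*} [PseudoMetricSpace 𝒳] {T : 𝒳 → 𝒳} {n : ℕ}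

lemma bowenMax_nonneg (T : 𝒳 → 𝒳) (n : ℕ) (x y : 𝒳) : 0 ≤ bowenMax T n x y :=
  NNReal.coe_nonneg _

lemma dist_le_bowenMax (T : 𝒳 → 𝒳) {n k : ℕ} (hk : k ∈ Finset.range n) (x y : 𝒳) :
    dist (T^[k] x) (T^[k] y) ≤ bowenMax T n x y := by
  rw [dist_nndist, bowenMax]
  exact_mod_cast Finset.le_sup (f := fun k => nndist (T^[k] x) (T^[k] y)) hk

lemma bowenMax_le_iff {c : ℝ} (hc : 0 ≤ c) {x y : 𝒳} :
    bowenMax T n x y ≤ c ↔ ∀ k ∈ Finset.range n, dist (T^[k] x) (T^[k] y) ≤ c := by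
  constructor
  · intro h k hk
    exact le_trans (dist_le_bowenMax T hk x y) h
  · intro h
    rw [bowenMax, ← Real.le_toNNReal_iff_coe_le hc, Finset.sup_le_iff]
    intro k hk
    rw [Real.le_toNNReal_iff_coe_le hc, ← dist_nndist]
    exact h k hk

lemma bowenMax_lt_iff {c : ℝ} (hc : 0 < c) {x y : 𝒳} :
    bowenMax T n x y < c ↔ ∀ k ∈ Finset.range n, dist (T^[k] x) (T^[k] y) < c := by
  constructor
  · intro h k hk
    exact lt_of_le_of_lt (dist_le_bowenMax T hk x y) h
  · intro h
    rw [bowenMax, ← Real.lt_toNNReal_iff_coe_lt, Finset.sup_lt_iff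
      (by simpa [bot_eq_zero, Real.toNNReal_pos] using hc)]
    intro k hk
    rw [Real.lt_toNNReal_iff_coe_lt, ← dist_nndist]
    exact h k hk

lemma bowenMax_self (T : 𝒳 → 𝒳) (n : ℕ) (x : 𝒳) : bowenMax T n x x = 0 := by
  rw [bowenMax]
  norm_cast
  simp [Finset.sup_eq_bot_iff]

lemma bowenMax_triangle (x u w : 𝒳) :
    bowenMax T n u w ≤ bowenMax T n x u + bowenMax T n x w := by
  rw [bowenMax_le_iff (add_nonneg (bowenMax_nonneg T n x u) (bowenMax_nonneg T n x w))]
  intro k hk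
  calc dist (T^[k] u) (T^[k] w) ≤ dist (T^[k] x) (T^[k] u) + dist (T^[k] x) (T^[k] w) :=
        dist_triangle_left _ _ _
    _ ≤ _ := add_le_add (dist_le_bowenMax T hk x u) (dist_le_bowenMax T hk x w)

lemma bowenAvg_nonneg (T : 𝒳 → 𝒳) (n : ℕ) (x y : 𝒳) : 0 ≤ bowenAvg T n x y := by
  rw [bowenAvg]
  positivity

lemma bowenAvg_self (T : 𝒳 → 𝒳) (n : ℕ) (x : 𝒳) : bowenAvg T n x x = 0 := by
  simp [bowenAvg]

lemma bowenAvg_triangle (x u w : 𝒳) :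
    bowenAvg T n u w ≤ bowenAvg T n x u + bowenAvg T n x w := by
  rcases Nat.eq_zero_or_pos n with h | h
  · simp [h, bowenAvg]
  · rw [bowenAvg, bowenAvg, bowenAvg, ← add_div,
      div_le_div_iff_of_pos_right (by exact_mod_cast h)]
    rw [← Finset.sum_add_distrib]
    exact Finset.sum_le_sum fun k _ => dist_triangle_left _ _ _

lemma bowenAvg_le_bowenMax (T : 𝒳 → 𝒳) (n : ℕ) (x y : 𝒳) :
    bowenAvg T n x y ≤ bowenMax T n x y := by
  rcases Nat.eq_zero_or_pos n with h | h
  · simp [h, bowenAvg, bowenMax_nonneg]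
  · rw [bowenAvg, div_le_iff₀ (by exact_mod_cast h)]
    calc (∑ k ∈ Finset.range n, dist (T^[k] x) (T^[k] y))
        ≤ ∑ _k ∈ Finset.range n, bowenMax T n x y :=
          Finset.sum_le_sum fun k hk => dist_le_bowenMax T hk x y
      _ = bowenMax T n x y * n := by simp [mul_comm]

lemma bowenAvg_continuous (hT : Continuous T) (n : ℕ) (x : 𝒳) :
    Continuous (fun y => bowenAvg T n x y) := by
  unfold bowenAvg
  exact (continuous_finset_sum _ fun k _ =>
    (Continuous.dist continuous_const (hT.iterate k))).div_const _

lemma bowenMax_open_ball (hT : Continuous T) (n : ℕ) (x : 𝒳) {c : ℝ} (hc : 0 < c) :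
    IsOpen {y | bowenMax T n x y < c} := by
  have h : {y | bowenMax T n x y < c} =
      ⋂ k ∈ Finset.range n, {y | dist (T^[k] x) (T^[k] y) < c} := by
    ext y
    simp only [mem_setOf_eq, mem_iInter]
    exact bowenMax_lt_iff hc
  rw [h]
  exact isOpen_biInter_finset fun k _ =>
    isOpen_lt (Continuous.dist continuous_const (hT.iterate k)) continuous_const

end BowenLemmas

lemma coverNum_spec {𝒳 : Type*} [TopologicalSpace 𝒳] [CompactSpace 𝒳] {ρ : 𝒳 → 𝒳 → ℝ}
    {ε : ℝ} (hε : 0 < ε) (hopen : ∀ x, IsOpen {y | ρ x y < ε / 2})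
    (hself : ∀ x, ρ x x = 0) (htri : ∀ x u w, ρ u w ≤ ρ x u + ρ x w) :
    ∃ U : Fin (coverNum 𝒳 ρ ε) → Set 𝒳, (∀ i, IsOpen (U i)) ∧ (∀ x, ∃ i, x ∈ U i) ∧
      ∀ i, ∀ x ∈ U i, ∀ y ∈ U i, ρ x y < ε := by
  have hne : {N : ℕ | ∃ U : Fin N → Set 𝒳, (∀ i, IsOpen (U i)) ∧ (∀ x, ∃ i, x ∈ U i) ∧
      ∀ i, ∀ x ∈ U i, ∀ y ∈ U i, ρ x y < ε}.Nonempty := by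
    obtain ⟨t, ht⟩ := IsCompact.elim_finite_subcover isCompact_univ
      (fun x => {y | ρ x y < ε / 2}) (fun x => hopen x)
      (fun x _ => mem_iUnion.mpr ⟨x, by simp [hself x, half_pos hε]⟩)
    refine ⟨t.card, fun i => {y | ρ ((t.equivFin.symm i : 𝒳)) y < ε / 2},
      fun i => hopen _, ?_, ?_⟩
    · intro x
      obtain ⟨c, hc, hx⟩ := mem_iUnion₂.mp (ht (mem_univ x))
      exact ⟨t.equivFin ⟨c, hc⟩, by simpa using hx⟩
    · intro i x hx y hy
      calc ρ x y ≤ ρ (t.equivFin.symm i : 𝒳) x + ρ (t.equivFin.symm i : 𝒳) y := htri _ _ _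
        _ < ε / 2 + ε / 2 := add_lt_add hx hy
        _ = ε := add_halves ε
  exact Nat.sInf_mem hne

lemma coverNum_mono {𝒳 : Type*} [TopologicalSpace 𝒳] {ρ₁ ρ₂ : 𝒳 → 𝒳 → ℝ} {ε : ℝ}
    (h : ∀ x y, ρ₁ x y ≤ ρ₂ x y)
    (hU : ∃ U : Fin (coverNum 𝒳 ρ₂ ε) → Set 𝒳, (∀ i, IsOpen (U i)) ∧ (∀ x, ∃ i, x ∈ U i) ∧
      ∀ i, ∀ x ∈ U i, ∀ y ∈ U i, ρ₂ x y < ε) :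
    coverNum 𝒳 ρ₁ ε ≤ coverNum 𝒳 ρ₂ ε := by
  obtain ⟨U, ho, hc, hd⟩ := hU
  exact Nat.sInf_le ⟨U, ho, hc, fun i x hx y hy => lt_of_le_of_lt (h x y) (hd i x hx y hy)⟩

lemma coverNum_pos {𝒳 : Type*} [TopologicalSpace 𝒳] [Nonempty 𝒳] {ρ : 𝒳 → 𝒳 → ℝ} {ε : ℝ}
    (hU : ∃ U : Fin (coverNum 𝒳 ρ ε) → Set 𝒳, (∀ i, IsOpen (U i)) ∧ (∀ x, ∃ i, x ∈ U i) ∧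
      ∀ i, ∀ x ∈ U i, ∀ y ∈ U i, ρ x y < ε) :
    0 < coverNum 𝒳 ρ ε := by
  obtain ⟨U, _, hc, _⟩ := hU
  obtain ⟨i, _⟩ := hc (Classical.arbitrary 𝒳)
  exact i.pos

lemma rateDistortion_le_aux {𝒳 : Type*} [MetricSpace 𝒳] [CompactSpace 𝒳]
    [MeasurableSpace 𝒳] [BorelSpace 𝒳] (T : 𝒳 → 𝒳) (hT : Continuous T)
    (μ : Measure 𝒳) [IsProbabilityMeasure μ] (ε : ℝ) (hε : 0 < ε) (n : ℕ) (hn : 0 < n) :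
    rateDistortion 𝒳 T μ ε ≤
      ENNReal.ofReal (Real.log (coverNum 𝒳 (bowenAvg T n) ε) / n) := by
  classical
  have hX𝒳 : Nonempty 𝒳 := by
    by_contra h
    rw [not_nonempty_iff] at h
    have h1 : μ univ = 1 := measure_univ
    rw [Set.univ_eq_empty_iff.mpr h, measure_empty] at h1
    exact zero_ne_one h1
  set N := coverNum 𝒳 (bowenAvg T n) ε with hNdef
  obtain ⟨U, hopen, hcov, hdiam⟩ := coverNum_spec (𝒳 := 𝒳) (ρ := bowenAvg T n) hε
    (fun x => isOpen_lt (bowenAvg_continuous hT n x) continuous_const)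
    (bowenAvg_self T n) (fun x u w => bowenAvg_triangle x u w)
  set c : Fin N → 𝒳 := fun i => if h : (U i).Nonempty then h.choose else Classical.arbitrary 𝒳
    with hcdef
  have hc : ∀ i, (U i).Nonempty → c i ∈ U i := fun i h => by
    simp only [hcdef, dif_pos h]
    exact h.choose_spec
  have hUne : ∀ x : 𝒳, (Finset.univ.filter fun i => x ∈ U i).Nonempty := fun x => by
    obtain ⟨i, hi⟩ := hcov x
    exact ⟨i, Finset.mem_filter.mpr ⟨Finset.mem_univ i, hi⟩⟩
  set idx : 𝒳 → Fin N := fun x => (Finset.univ.filter fun i => x ∈ U i).min' (hUne x)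
    with hidxdef
  have hidxmem : ∀ x, x ∈ U (idx x) := fun x =>
    (Finset.mem_filter.mp (Finset.min'_mem _ (hUne x))).2
  have hidxmeas : Measurable idx := by
    apply measurable_to_countable'
    intro i
    have heq : idx ⁻¹' {i} = (U i \ ⋃ j : Fin N, ⋃ (_ : j < i), U j) := by
      ext x
      simp only [mem_preimage, mem_singleton_iff, mem_diff, mem_iUnion, not_exists]
      constructor
      · intro h
        refine ⟨h ▸ hidxmem x, fun j hj hxj => ?_⟩
        have hle : idx x ≤ j :=
          Finset.min'_le _ j (Finset.mem_filter.mpr ⟨Finset.mem_univ j, hxj⟩)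
        rw [h] at hle
        exact absurd hj (not_lt.mpr hle)
      · rintro ⟨hxi, hmin⟩
        have h1 : idx x ≤ i :=
          Finset.min'_le _ i (Finset.mem_filter.mpr ⟨Finset.mem_univ i, hxi⟩)
        rcases lt_or_eq_of_le h1 with h2 | h2
        · exact absurd (hidxmem x) (hmin (idx x) h2)
        · exact h2
    rw [heq]
    exact ((hopen i).measurableSet).diff
      (MeasurableSet.iUnion fun j => MeasurableSet.iUnion fun _ => (hopen j).measurableSet)
  obtain ⟨e, he⟩ := exists_measurableEmbedding_real 𝒳
  obtain ⟨X, hXmeas, hXe⟩ := he.exists_measurable_extend measurable_id (fun _ => hX𝒳)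
  letI mΩ : MeasureSpace ℝ := ⟨μ.map e⟩
  have hprob : IsProbabilityMeasure (ℙ : Measure ℝ) :=
    Measure.isProbabilityMeasure_map he.measurable.aemeasurable
  set ψ : 𝒳 → Fin n → 𝒳 := fun x k => T^[(k : ℕ)] (c (idx x)) with hψdef
  have hψmeas : Measurable ψ := by
    have h : ψ = (fun i (k : Fin n) => T^[(k : ℕ)] (c i)) ∘ idx := rfl
    rw [h]
    exact Measurable.comp Measurable.of_discrete hidxmeas
  set Y : ℝ → Fin n → 𝒳 := ψ ∘ X with hYdef
  have hYmeas : Measurable Y := hψmeas.comp hXmeas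
  have hmap : Measure.map X ℙ = μ := by
    show Measure.map X (μ.map e) = μ
    rw [Measure.map_map hXmeas he.measurable, hXe, Measure.map_id]
  set D : 𝒳 → ℝ := fun x => (∑ k : Fin n, dist (T^[(k : ℕ)] x) (ψ x k)) / n with hDdef
  have hDeq : ∀ x, D x = bowenAvg T n x (c (idx x)) := by
    intro x
    rw [hDdef, bowenAvg, ← Fin.sum_univ_eq_sum_range
      (fun k => dist (T^[k] x) (T^[k] (c (idx x)))) n]
  have hDlt : ∀ x, D x < ε := fun x => by
    rw [hDeq x]
    exact hdiam (idx x) x (hidxmem x) (c (idx x)) (hc (idx x) ⟨x, hidxmem x⟩)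
  have hD0 : ∀ x, 0 ≤ D x := fun x => (hDeq x) ▸ bowenAvg_nonneg T n x _
  have hDmeas : Measurable D := by
    apply Measurable.div_const
    apply Finset.measurable_sum
    intro k _
    exact Measurable.dist ((hT.iterate (k : ℕ)).measurable)
      ((Measurable.of_discrete (f := fun i => T^[(k : ℕ)] (c i))).comp hidxmeas)
  have hDint : Integrable D μ :=
    Integrable.mono' (integrable_const ε) hDmeas.aestronglyMeasurable
      (ae_of_all _ fun x => by
        rw [Real.norm_eq_abs, abs_of_nonneg (hD0 x)]
        exact (hDlt x).le)
  have hint : ∫ x, D x ∂μ < ε := by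
    have hpos : 0 < ∫ x, (ε - D x) ∂μ := by
      rw [integral_pos_iff_support_of_nonneg_ae
        (ae_of_all _ fun x => sub_nonneg.mpr (hDlt x).le) ((integrable_const ε).sub hDint)]
      have hsupp : Function.support (fun x => ε - D x) = univ :=
        eq_univ_of_forall fun x => ne_of_gt (sub_pos.mpr (hDlt x))
      rw [hsupp, measure_univ]
      norm_num
    rw [integral_sub (integrable_const ε) hDint, integral_const] at hpos
    simp only [probReal_univ, measure_univ, ENNReal.toReal_one, one_smul] at hpos
    linarith
  have hdist : (∫ ω, (∑ k : Fin n, dist (T^[(k : ℕ)] (X ω)) (Y ω k)) / n ∂ℙ) < ε := by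
    have heq : (fun ω => (∑ k : Fin n, dist (T^[(k : ℕ)] (X ω)) (Y ω k)) / (n : ℝ)) =
        D ∘ X := rfl
    rw [heq]
    show ∫ ω, (D ∘ X) ω ∂(μ.map e) < ε
    rw [integral_map he.measurable.aemeasurable (hDmeas.comp hXmeas).aestronglyMeasurable]
    calc ∫ x, (D ∘ X) (e x) ∂μ = ∫ x, D x ∂μ := by
          refine integral_congr_ae (ae_of_all _ fun x => ?_)
          show D (X (e x)) = D x
          rw [show X (e x) = x from congrFun hXe x]
      _ < ε := hint
  have hMI : mutualInformation X Y ≤ ENNReal.ofReal (Real.log N) := by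
    apply mutualInformation_le_log hXmeas hYmeas (fun i (k : Fin n) => T^[(k : ℕ)] (c i))
    intro ω
    exact ⟨idx (X ω), rfl⟩
  have hmem : mutualInformation X Y / (n : ℝ≥0∞) ∈
      {r : ℝ≥0∞ | ∃ (m : ℕ), 0 < m ∧ ∃ (Ω : Type) (_ : MeasureSpace Ω),
        IsProbabilityMeasure (ℙ : Measure Ω) ∧ ∃ (X' : Ω → 𝒳) (Y' : Ω → Fin m → 𝒳),
          Measurable X' ∧ Measurable Y' ∧ Measure.map X' ℙ = μ ∧
          (∫ ω, (∑ k : Fin m, dist (T^[(k : ℕ)] (X' ω)) (Y' ω k)) / m ∂ℙ) < ε ∧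
          r = mutualInformation X' Y' / m} :=
    ⟨n, hn, ℝ, mΩ, hprob, X, Y, hXmeas, hYmeas, hmap, hdist, rfl⟩
  calc rateDistortion 𝒳 T μ ε ≤ mutualInformation X Y / (n : ℝ≥0∞) := sInf_le hmem
    _ ≤ ENNReal.ofReal (Real.log N) / (n : ℝ≥0∞) := ENNReal.div_le_div_right hMI _
    _ = ENNReal.ofReal (Real.log N / n) := by
        rw [ENNReal.ofReal_div_of_pos (show (0:ℝ) < n by exact_mod_cast hn),
          ENNReal.ofReal_natCast]

/-- `R_μ(ε) ≤ S̃(𝒳,T,d,ε) ≤ S(𝒳,T,d,ε)` where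
`S̃ = lim (1/n) log #(𝒳, d̄_n, ε)` and `S = lim (1/n) log #(𝒳, d_n, ε)`. -/
theorem rateDistortion_le_S {𝒳 : Type*} [MetricSpace 𝒳] [CompactSpace 𝒳]
    [MeasurableSpace 𝒳] [BorelSpace 𝒳] (T : 𝒳 → 𝒳) (hT : Continuous T)
    (μ : Measure 𝒳) [IsProbabilityMeasure μ] (hinv : Measure.map T μ = μ)
    (ε : ℝ) (hε : 0 < ε) (Stil S : ℝ)
    (hStil : Tendsto (fun n : ℕ => Real.log (coverNum 𝒳 (bowenAvg T n) ε) / n)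
      atTop (𝓝 Stil))
    (hS : Tendsto (fun n : ℕ => Real.log (coverNum 𝒳 (bowenMax T n) ε) / n)
      atTop (𝓝 S)) :
    rateDistortion 𝒳 T μ ε ≤ ENNReal.ofReal Stil ∧ Stil ≤ S := by
  have hnon : Nonempty 𝒳 := by
    by_contra h
    rw [not_nonempty_iff] at h
    have h1 : μ univ = 1 := measure_univ
    rw [Set.univ_eq_empty_iff.mpr h, measure_empty] at h1
    exact zero_ne_one h1
  have hcoverAvg : ∀ n : ℕ, ∃ U : Fin (coverNum 𝒳 (bowenAvg T n) ε) → Set 𝒳,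
      (∀ i, IsOpen (U i)) ∧ (∀ x, ∃ i, x ∈ U i) ∧
      ∀ i, ∀ x ∈ U i, ∀ y ∈ U i, bowenAvg T n x y < ε := fun n =>
    coverNum_spec hε (fun x => isOpen_lt (bowenAvg_continuous hT n x) continuous_const)
      (bowenAvg_self T n) (fun x u w => bowenAvg_triangle x u w)
  have hcoverMax : ∀ n : ℕ, ∃ U : Fin (coverNum 𝒳 (bowenMax T n) ε) → Set 𝒳,
      (∀ i, IsOpen (U i)) ∧ (∀ x, ∃ i, x ∈ U i) ∧
      ∀ i, ∀ x ∈ U i, ∀ y ∈ U i, bowenMax T n x y < ε := fun n =>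
    coverNum_spec hε (fun x => bowenMax_open_ball hT n x (half_pos hε))
      (bowenMax_self T n) (fun x u w => bowenMax_triangle x u w)
  constructor
  · refine ge_of_tendsto ((ENNReal.continuous_ofReal.tendsto Stil).comp hStil) ?_
    filter_upwards [eventually_gt_atTop 0] with n hn
    exact rateDistortion_le_aux T hT μ ε hε n hn
  · refine le_of_tendsto_of_tendsto' hStil hS fun n => ?_
    have h1 : 0 < coverNum 𝒳 (bowenAvg T n) ε := coverNum_pos (hcoverAvg n)
    have h2 : coverNum 𝒳 (bowenAvg T n) ε ≤ coverNum 𝒳 (bowenMax T n) ε :=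
      coverNum_mono (bowenAvg_le_bowenMax T n) (hcoverMax n)
    rcases Nat.eq_zero_or_pos n with hn | hn
    · simp [hn]
    · have hlog : Real.log (coverNum 𝒳 (bowenAvg T n) ε) ≤
          Real.log (coverNum 𝒳 (bowenMax T n) ε) :=
        Real.log_le_log (by exact_mod_cast h1) (by exact_mod_cast h2)
      gcongr
end
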